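/- arXiv:2303.16413 — 8 statements merged into one kernel-verified Lean document; each statement's English description precedes it below -/
import Mathlib

section
/- Let B be an ordered branching program of length n and width w, let G : {0,1}^s → {0,1}^n be any function, and let ε ≥ 0. If for every i < n we have ∑_{v∈V_i} |E_G[N_v]| ≤ ε, then G (ε·n)-fools B, i.e. |E[B] − E_G[B]| ≤ ε·n. -/
open Finset
open scoped Classical

/-- An ordered branching program of length `n` and width `w`: each layer's states
are identified with `Fin w`; `next i v b` is the successor of state `v` in layer `i`
on bit `b`; states in the last layer are labeled by `label`. -/
structure OBP (n w : ℕ) where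
  start : Fin w
  next : ℕ → Fin w → Bool → Fin w
  label : Fin w → Bool

namespace OBP

/-- The state reached from state `v` in layer `i` after reading `k` bits. -/
def walk {n w : ℕ} (B : OBP n w) : (k : ℕ) → (i : ℕ) → Fin w → (Fin k → Bool) → Fin w
  | 0, _, v, _ => v
  | k + 1, i, v, x => walk B k (i + 1) (B.next i v (x 0)) (fun j => x j.succ)

/-- The state in layer `i` reached from the start state on a length-`i` input. -/
def reach {n w : ℕ} (B : OBP n w) {i : ℕ} (x : Fin i → Bool) : Fin w :=
  B.walk i 0 B.start x

/-- The boolean output of the program on an `n`-bit input. -/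
def eval {n w : ℕ} (B : OBP n w) (x : Fin n → Bool) : Bool :=
  B.label (B.reach x)

end OBP

/-- Expectation of a real-valued function under the uniform distribution. -/
noncomputable def Exp {α : Type*} [Fintype α] (f : α → ℝ) : ℝ :=
  (∑ a, f a) / (Fintype.card α : ℝ)

/-- Probability of an event under the uniform distribution. -/
noncomputable def prob {α : Type*} [Fintype α] (p : α → Prop) : ℝ :=
  ((Finset.univ.filter p).card : ℝ) / (Fintype.card α : ℝ)

/-- A boolean viewed as a real number. -/
def bval (b : Bool) : ℝ := if b then 1 else 0

/-- The first `k` bits of `x` (padded with `false` if `k > n`). -/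
def bits {n : ℕ} (x : Fin n → Bool) (k : ℕ) : Fin k → Bool :=
  fun j => if h : (j : ℕ) < n then x ⟨j, h⟩ else false

/-- The pseudo-expectation `E_G[f]` of `f : {0,1}^i → ℝ` under the generator `G`,
where `f` is fed the length-`i` prefix of the output of `G`. -/
noncomputable def ExpG {s n : ℕ} (G : (Fin s → Bool) → Fin n → Bool) (i : ℕ)
    (f : (Fin i → Bool) → ℝ) : ℝ :=
  Exp (fun y => f (bits (G y) i))

/-- The indicator `B_{→v}` of reaching state `v` in layer `i`. -/
def reachInd {n w : ℕ} (B : OBP n w) {i : ℕ} (v : Fin w) (x : Fin i → Bool) : ℝ :=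
  if B.reach x = v then 1 else 0

/-- The next-bit bias function `N_v` for a state `v` in layer `i`. -/
def Nv {n w : ℕ} (B : OBP n w) {i : ℕ} (v : Fin w) (x : Fin (i + 1) → Bool) : ℝ :=
  if B.reach (fun j : Fin i => x j.castSucc) = v then
    (if x (Fin.last i) then 1 else -1)
  else 0

/-! ### Auxiliary lemmas -/

section Aux

lemma Exp_const {α : Type*} [Fintype α] [Nonempty α] (c : ℝ) :
    Exp (fun _ : α => c) = c := by
  simp [Exp]

lemma Exp_sub {α : Type*} [Fintype α] (f g : α → ℝ) :
    Exp f - Exp g = Exp (fun a => f a - g a) := by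
  simp [Exp, Finset.sum_sub_distrib, sub_div]

lemma Exp_sum {α β : Type*} [Fintype α] [Fintype β] (F : β → α → ℝ) :
    Exp (fun a => ∑ v : β, F v a) = ∑ v : β, Exp (F v) := by
  simp only [Exp, ← Finset.sum_div]
  rw [Finset.sum_comm]

lemma Exp_mul_const {α : Type*} [Fintype α] (f : α → ℝ) (c : ℝ) :
    Exp (fun a => f a * c) = Exp f * c := by
  simp [Exp, ← Finset.sum_mul, mul_div_right_comm]

lemma Exp_split {k : ℕ} (f : (Fin (k + 1) → Bool) → ℝ) :
    Exp f = (Exp (fun z : Fin k → Bool => f (Fin.cons false z))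
      + Exp (fun z : Fin k → Bool => f (Fin.cons true z))) / 2 := by
  have hsum : ∑ x : Fin (k + 1) → Bool, f x
      = ∑ p : Bool × (Fin k → Bool), f (Fin.cons p.1 p.2) := by
    rw [← Equiv.sum_comp (Fin.consEquiv (fun _ => Bool)) f]
    rfl
  have hcard : (Fintype.card (Fin (k + 1) → Bool) : ℝ)
      = 2 * (Fintype.card (Fin k → Bool) : ℝ) := by
    simp [Fintype.card_fun, pow_succ]
    ring
  rw [Exp, hsum, Fintype.sum_prod_type, Fintype.sum_bool, hcard]
  have h2 : (Fintype.card (Fin k → Bool) : ℝ) ≠ 0 := by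
    simp [Fintype.card_fun]
  rw [Exp, Exp]
  field_simp
  ring

/-- Acceptance probability from state `v` in layer `i` with `k` uniform bits remaining. -/
noncomputable def gAux {n w : ℕ} (B : OBP n w) : ℕ → ℕ → Fin w → ℝ
  | 0, _, v => bval (B.label v)
  | k + 1, i, v => (gAux B k (i + 1) (B.next i v false) + gAux B k (i + 1) (B.next i v true)) / 2

lemma gAux_nonneg {n w : ℕ} (B : OBP n w) : ∀ k i v, 0 ≤ gAux B k i v := by
  intro k
  induction k with
  | zero => intro i v; simp [gAux, bval]; positivity
  | succ k ih =>
    intro i v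
    have h1 := ih (i + 1) (B.next i v false)
    have h2 := ih (i + 1) (B.next i v true)
    simp only [gAux]
    linarith

lemma gAux_le_one {n w : ℕ} (B : OBP n w) : ∀ k i v, gAux B k i v ≤ 1 := by
  intro k
  induction k with
  | zero => intro i v; simp [gAux, bval]; split <;> norm_num
  | succ k ih =>
    intro i v
    have h1 := ih (i + 1) (B.next i v false)
    have h2 := ih (i + 1) (B.next i v true)
    simp only [gAux]
    linarith

lemma gAux_eq_Exp {n w : ℕ} (B : OBP n w) : ∀ k i v,
    gAux B k i v = Exp (fun z : Fin k → Bool => bval (B.label (B.walk k i v z))) := by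
  intro k
  induction k with
  | zero =>
    intro i v
    rw [gAux]
    exact (Exp_const _).symm
  | succ k ih =>
    intro i v
    rw [Exp_split, gAux, ih, ih]
    have hb : ∀ (b : Bool) (z : Fin k → Bool),
        B.walk (k + 1) i v (Fin.cons b z) = B.walk k (i + 1) (B.next i v b) z := by
      intro b z
      rw [OBP.walk]
      simp [Fin.cons_zero, Fin.cons_succ]
    simp only [hb]

lemma walk_succ {n w : ℕ} (B : OBP n w) : ∀ (k i : ℕ) (v : Fin w) (x : Fin (k + 1) → Bool),
    B.walk (k + 1) i v x
      = B.next (i + k) (B.walk k i v (fun j => x j.castSucc)) (x (Fin.last k)) := by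
  intro k
  induction k with
  | zero =>
    intro i v x
    simp [OBP.walk, Fin.last]
  | succ k ih =>
    intro i v x
    show B.walk (k + 1) (i + 1) (B.next i v (x 0)) (fun j => x j.succ) = _
    rw [ih]
    have harith : i + 1 + k = i + (k + 1) := by omega
    have hlast : (Fin.last k).succ = Fin.last (k + 1) := Fin.succ_last k
    have hwalk : (B.walk (k + 1) i v fun j => x j.castSucc)
        = B.walk k (i + 1) (B.next i v (x 0))
          (fun j : Fin k => x j.succ.castSucc) := by
      show B.walk k (i+1) (B.next i v (x (0 : Fin (k+1)).castSucc))
          (fun j : Fin k => x j.succ.castSucc) = _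
      congr 1
    rw [hwalk, harith, hlast]
    have : (fun j : Fin k => x j.succ.castSucc) = (fun j : Fin k => x j.castSucc.succ) := by
      funext j; rw [Fin.succ_castSucc]
    rw [this]

lemma bits_castSucc {n : ℕ} (x : Fin n → Bool) (i : ℕ) :
    (fun j : Fin i => bits x (i + 1) j.castSucc) = bits x i := by
  funext j
  simp [bits, Fin.coe_castSucc]

lemma bits_self {n : ℕ} (x : Fin n → Bool) : bits x n = x := by
  funext j
  simp [bits]

end Aux

theorem stmt0 {n w s : ℕ} (B : OBP n w) (G : (Fin s → Bool) → Fin n → Bool)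
    (ε : ℝ) (hε : 0 ≤ ε)
    (h : ∀ i, i < n → ∑ v : Fin w, |ExpG G (i + 1) (Nv B v)| ≤ ε) :
    |Exp (fun x : Fin n → Bool => bval (B.eval x)) -
      Exp (fun y : Fin s → Bool => bval (B.eval (G y)))| ≤ ε * n := by
  set H : ℕ → ℝ := fun i => Exp (fun y : Fin s → Bool => gAux B (n - i) i (B.reach (bits (G y) i)))
    with hH
  have hH0 : H 0 = Exp (fun x : Fin n → Bool => bval (B.eval x)) := by
    have hr : ∀ y : Fin s → Bool, B.reach (bits (G y) 0) = B.start := fun y => rfl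
    simp only [hH, hr, Nat.sub_zero]
    rw [Exp_const, gAux_eq_Exp]
    rfl
  have hHn : H n = Exp (fun y : Fin s → Bool => bval (B.eval (G y))) := by
    simp only [hH, Nat.sub_self, gAux, bits_self]
    rfl
  have step : ∀ i, i < n → |H (i + 1) - H i| ≤ ε := by
    intro i hi
    set m := n - (i + 1) with hm
    have hni : n - i = m + 1 := by omega
    set d : Fin w → ℝ := fun v =>
      (gAux B m (i + 1) (B.next i v true) - gAux B m (i + 1) (B.next i v false)) / 2 with hd
    have hdle : ∀ v, |d v| ≤ 1 := by
      intro v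
      have h1 := gAux_nonneg B m (i + 1) (B.next i v true)
      have h2 := gAux_nonneg B m (i + 1) (B.next i v false)
      have h3 := gAux_le_one B m (i + 1) (B.next i v true)
      have h4 := gAux_le_one B m (i + 1) (B.next i v false)
      rw [hd, abs_div]
      rw [abs_of_nonneg (by norm_num : (0:ℝ) ≤ 2)]
      rw [div_le_iff₀ (by norm_num : (0:ℝ) < 2)]
      rw [abs_le]
      constructor <;> linarith
    have hreach : ∀ y : Fin s → Bool, B.reach (bits (G y) (i + 1))
        = B.next i (B.reach (bits (G y) i)) (bits (G y) (i + 1) (Fin.last i)) := by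
      intro y
      rw [OBP.reach, walk_succ, bits_castSucc, Nat.zero_add]
      rfl
    have key : ∀ y : Fin s → Bool,
        gAux B (n - (i + 1)) (i + 1) (B.reach (bits (G y) (i + 1)))
          - gAux B (n - i) i (B.reach (bits (G y) i))
        = ∑ v : Fin w, Nv B v (bits (G y) (i + 1)) * d v := by
      intro y
      have hNv : ∀ v, Nv B v (bits (G y) (i + 1))
          = if B.reach (bits (G y) i) = v
              then (if bits (G y) (i + 1) (Fin.last i) then (1:ℝ) else -1) else 0 := by
        intro v
        rw [Nv, bits_castSucc]
      simp only [hNv, ite_mul, zero_mul, Finset.sum_ite_eq, Finset.mem_univ, if_true]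
      rw [hni, gAux, ← hm, hreach y]
      cases hb : bits (G y) (i + 1) (Fin.last i) <;> simp [hd] <;> ring
    have hstep : H (i + 1) - H i = ∑ v : Fin w, ExpG G (i + 1) (Nv B v) * d v := by
      rw [hH, Exp_sub]
      rw [show (fun y : Fin s → Bool =>
            gAux B (n - (i + 1)) (i + 1) (B.reach (bits (G y) (i + 1)))
              - gAux B (n - i) i (B.reach (bits (G y) i)))
          = (fun y : Fin s → Bool => ∑ v : Fin w, Nv B v (bits (G y) (i + 1)) * d v)
        from funext key]
      rw [Exp_sum]
      refine Finset.sum_congr rfl fun v _ => ?_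
      rw [Exp_mul_const]
      rfl
    rw [hstep]
    calc |∑ v : Fin w, ExpG G (i + 1) (Nv B v) * d v|
        ≤ ∑ v : Fin w, |ExpG G (i + 1) (Nv B v) * d v| := Finset.abs_sum_le_sum_abs _ _
      _ ≤ ∑ v : Fin w, |ExpG G (i + 1) (Nv B v)| := by
          refine Finset.sum_le_sum fun v _ => ?_
          rw [abs_mul]
          calc |ExpG G (i + 1) (Nv B v)| * |d v|
              ≤ |ExpG G (i + 1) (Nv B v)| * 1 :=
                mul_le_mul_of_nonneg_left (hdle v) (abs_nonneg _)
            _ = |ExpG G (i + 1) (Nv B v)| := mul_one _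
      _ ≤ ε := h i hi
  have tel : H n - H 0 = ∑ i ∈ Finset.range n, (H (i + 1) - H i) :=
    (Finset.sum_range_sub H n).symm
  rw [← hH0, ← hHn, abs_sub_comm, tel]
  calc |∑ i ∈ Finset.range n, (H (i + 1) - H i)|
      ≤ ∑ i ∈ Finset.range n, |H (i + 1) - H i| := Finset.abs_sum_le_sum_abs _ _
    _ ≤ ∑ i ∈ Finset.range n, ε := Finset.sum_le_sum fun i hi =>
        step i (Finset.mem_range.mp hi)
    _ = ε * n := by simp [mul_comm]
end

section
/- Let B be an ordered branching program of length n and width w, let G : {0,1}^s → {0,1}^n, let ε > 0, and suppose for some i < n that ∑_{v∈V_i} |E_G[N_v]| > ε. Define T : {0,1}^i → {0,1} by T(x) = 1 if E_G[N_v] ≥ 0 and T(x) = 0 otherwise, where v = B[v_st, x] ∈ V_i. Then Pr_{y←U_s}[T(G(y)_{1..i}) = G(y)_{i+1}] = (1/2)·∑_{v∈V_i} (E_G[B_{→v}] + |E_G[N_v]|) > (1/2)(1 + ε). -/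
open Finset
open scoped Classical

theorem stmt2 {n w s : ℕ} (B : OBP n w) (G : (Fin s → Bool) → Fin n → Bool)
    (ε : ℝ) (hε : 0 < ε) (i : ℕ) (hi : i < n)
    (h : ε < ∑ v : Fin w, |ExpG G (i + 1) (Nv B v)|)
    (T : (Fin i → Bool) → Bool)
    (hT : ∀ x : Fin i → Bool, T x = true ↔ 0 ≤ ExpG G (i + 1) (Nv B (B.reach x))) :
    (prob (fun y : Fin s → Bool => T (bits (G y) i) = G y ⟨i, hi⟩) =
      (1 / 2) * ∑ v : Fin w, (ExpG G i (reachInd B v) + |ExpG G (i + 1) (Nv B v)|)) ∧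
    (1 / 2) * (1 + ε) < prob (fun y : Fin s → Bool => T (bits (G y) i) = G y ⟨i, hi⟩) := by

  classical
  set E : Fin w → ℝ := fun v => ExpG G (i + 1) (Nv B v) with hE
  set sg : Fin w → ℝ := fun v => if 0 ≤ E v then 1 else -1 with hsg
  have habs : ∀ v, |E v| = sg v * E v := by
    intro v
    by_cases h0 : 0 ≤ E v
    · simp [hsg, h0, abs_of_nonneg h0]
    · simp [hsg, h0, abs_of_neg (lt_of_not_ge h0)]
  have key : ∀ y : Fin s → Bool,
      (if T (bits (G y) i) = G y ⟨i, hi⟩ then (1:ℝ) else 0)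
        = (1/2) * ∑ v, (reachInd B v (bits (G y) i)
            + sg v * Nv B v (bits (G y) (i+1))) := by
    intro y
    set x := bits (G y) i with hx
    set b := G y ⟨i, hi⟩ with hb
    have hpre : (fun j : Fin i => bits (G y) (i+1) j.castSucc) = x := by
      funext j
      have hj : (j:ℕ) < n := lt_trans j.isLt hi
      simp [hx, bits, Fin.castSucc, hj]
    have hlast : bits (G y) (i+1) (Fin.last i) = b := by
      simp [hb, bits, Fin.last, hi]
    have hNv : ∀ v, Nv B v (bits (G y) (i+1)) =
        if B.reach x = v then (if b then 1 else -1) else 0 := by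
      intro v; unfold Nv; rw [hpre, hlast]
    have hsum1 : ∑ v, reachInd B v x = 1 := by
      unfold reachInd; simp
    have hsum2 : ∑ v, sg v * Nv B v (bits (G y) (i+1))
        = sg (B.reach x) * (if b then 1 else -1) := by
      rw [Finset.sum_congr rfl (fun v _ => by rw [hNv v])]
      simp [mul_ite, mul_zero]
    rw [Finset.sum_add_distrib, hsum1, hsum2]
    have hTx := hT x
    by_cases hbv : b = true
    · by_cases ht : T x = true
      · have hs : sg (B.reach x) = 1 := by simp [hsg, show 0 ≤ E (B.reach x) from hTx.mp ht]
        have heq : T x = b := by rw [ht, hbv]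
        rw [if_pos heq, hs, hbv]; norm_num
      · have h0 : ¬ (0 ≤ E (B.reach x)) := fun h0 => ht (hTx.mpr h0)
        have hs : sg (B.reach x) = -1 := by simp [hsg, h0]
        have hne : T x ≠ b := by rw [hbv]; exact ht
        rw [if_neg hne, hs, hbv]; norm_num
    · by_cases ht : T x = true
      · have hs : sg (B.reach x) = 1 := by simp [hsg, show 0 ≤ E (B.reach x) from hTx.mp ht]
        have hne : T x ≠ b := fun hc => hbv (by rw [← hc]; exact ht)
        rw [if_neg hne, hs, if_neg hbv]; norm_num
      · have h0 : ¬ (0 ≤ E (B.reach x)) := fun h0 => ht (hTx.mpr h0)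
        have hs : sg (B.reach x) = -1 := by simp [hsg, h0]
        have ht' : T x = false := by simpa using ht
        have hb' : b = false := by simpa using hbv
        have heq : T x = b := by rw [ht', hb']
        rw [if_pos heq, hs, if_neg hbv]; norm_num
  have hcard : (Fintype.card (Fin s → Bool) : ℝ) ≠ 0 := by
    exact_mod_cast Fintype.card_ne_zero
  have hprob : prob (fun y : Fin s → Bool => T (bits (G y) i) = G y ⟨i, hi⟩)
      = (1/2) * ∑ v, (ExpG G i (reachInd B v) + sg v * E v) := by
    unfold prob
    rw [Finset.card_filter]
    push_cast
    simp only [key]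
    simp only [ExpG, Exp, hE]
    rw [← Finset.mul_sum, Finset.sum_comm, mul_div_assoc]
    congr 1
    rw [Finset.sum_div]
    refine Finset.sum_congr rfl fun v _ => ?_
    rw [Finset.sum_add_distrib, add_div, ← Finset.mul_sum, mul_div_assoc]
  have heq : prob (fun y : Fin s → Bool => T (bits (G y) i) = G y ⟨i, hi⟩)
      = (1 / 2) * ∑ v : Fin w, (ExpG G i (reachInd B v) + |ExpG G (i + 1) (Nv B v)|) := by
    rw [hprob]
    congr 1
    exact Finset.sum_congr rfl fun v _ => by rw [habs v]
  refine ⟨heq, ?_⟩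
  rw [heq]
  have hones : ∑ v : Fin w, ExpG G i (reachInd B v) = 1 := by
    simp only [ExpG, Exp]
    rw [← Finset.sum_div, Finset.sum_comm]
    have : ∀ y ∈ (Finset.univ : Finset (Fin s → Bool)),
        ∑ v : Fin w, reachInd B v (bits (G y) i) = 1 := by
      intro y _; unfold reachInd; simp
    rw [Finset.sum_congr rfl this]
    simp [Finset.card_univ]
  have : ∑ v : Fin w, (ExpG G i (reachInd B v) + |ExpG G (i + 1) (Nv B v)|)
      = 1 + ∑ v : Fin w, |ExpG G (i + 1) (Nv B v)| := by
    rw [Finset.sum_add_distrib, hones]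
  rw [this]
  have h2 : (0:ℝ) < 1/2 := by norm_num
  exact (mul_lt_mul_iff_right₀ h2).mpr (by linarith)
end

section
/- Let F = F_2^k be the k-dimensional vector space over the field with two elements, with ⊕ denoting addition in F, ⟨·,·⟩ the inner product mod 2, and e_1, ..., e_k the standard basis vectors. Let ℓ ≥ 1, let p : F^ℓ → F be any function, and define g : F^ℓ × F → {0,1} by g(x,y) = ⟨p(x), y⟩. Suppose B : F^ℓ × F → {0,1} satisfies Pr_{(x,y)←uniform}[B(x,y) = g(x,y)] > 0.99. Define B′ : F^ℓ → F coordinate-wise by (B′(x))_i = 1 if and only if |{z ∈ F : B(x, e_i ⊕ z) ⊕ B(x, z) = 1}| > |F|/2. Then Pr_{x←uniform over F^ℓ}[B′(x) = p(x)] ≥ 0.96. -/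
open Finset
open scoped Classical

theorem stmt4 (k ℓ : ℕ) (hℓ : 1 ≤ ℓ)
    (p : (Fin ℓ → (Fin k → ZMod 2)) → (Fin k → ZMod 2))
    (B : (Fin ℓ → (Fin k → ZMod 2)) → (Fin k → ZMod 2) → ZMod 2)
    (hB : 0.99 < prob (fun xy : (Fin ℓ → (Fin k → ZMod 2)) × (Fin k → ZMod 2) =>
        B xy.1 xy.2 = ∑ i : Fin k, p xy.1 i * xy.2 i))
    (B' : (Fin ℓ → (Fin k → ZMod 2)) → (Fin k → ZMod 2))
    (hB' : ∀ (x : Fin ℓ → (Fin k → ZMod 2)) (i : Fin k),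
      B' x i = 1 ↔ Fintype.card (Fin k → ZMod 2) <
        2 * (Finset.univ.filter (fun z : Fin k → ZMod 2 =>
          B x (Pi.single i 1 + z) + B x z = 1)).card) :
    0.96 ≤ prob (fun x : Fin ℓ → (Fin k → ZMod 2) => B' x = p x) := by
  classical
  have htwo : ∀ a : ZMod 2, a + a = 0 := by decide
  have hzo : ∀ a : ZMod 2, a = 0 ∨ a = 1 := by decide
  set N := Fintype.card (Fin k → ZMod 2) with hNdef
  set M := Fintype.card (Fin ℓ → Fin k → ZMod 2) with hMdef
  have hNpos : 0 < N := Fintype.card_pos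
  have hMpos : 0 < M := Fintype.card_pos
  set bad : (Fin ℓ → Fin k → ZMod 2) → ℕ := fun x =>
    (univ.filter (fun y : Fin k → ZMod 2 => ¬ (B x y = ∑ i, p x i * y i))).card with hbaddef
  -- key : local correctness
  have key : ∀ x, 4 * bad x < N → B' x = p x := by
    intro x hx
    funext i
    set E := (univ.filter (fun y : Fin k → ZMod 2 => ¬ (B x y = ∑ i, p x i * y i)))
      with hEdef
    have hEcard : E.card = bad x := rfl
    have hinv : ∀ z : Fin k → ZMod 2, Pi.single i 1 + (Pi.single i 1 + z) = z := by
      intro z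
      funext j
      simp only [Pi.add_apply]
      rw [← add_assoc, htwo, zero_add]
    have hval : ∀ z : Fin k → ZMod 2, z ∉ E → Pi.single i 1 + z ∉ E →
        B x (Pi.single i 1 + z) + B x z = p x i := by
      intro z hz hz'
      have h1 : B x z = ∑ j, p x j * z j := by
        by_contra h; exact hz (mem_filter.mpr ⟨mem_univ _, h⟩)
      have h2 : B x (Pi.single i 1 + z) = ∑ j, p x j * ((Pi.single i 1 + z) : Fin k → ZMod 2) j := by
        by_contra h; exact hz' (mem_filter.mpr ⟨mem_univ _, h⟩)
      rw [h1, h2, ← Finset.sum_add_distrib]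
      have hterm : ∀ j : Fin k, p x j * ((Pi.single i 1 + z) : Fin k → ZMod 2) j + p x j * z j
          = p x j * (Pi.single i 1 : Fin k → ZMod 2) j := by
        intro j
        simp only [Pi.add_apply, mul_add]
        rw [add_assoc, htwo, add_zero]
      rw [Finset.sum_congr rfl fun j _ => hterm j]
      simp [Pi.single_apply]
    set T := (univ.filter (fun z : Fin k → ZMod 2 =>
      B x (Pi.single i 1 + z) + B x z = 1)) with hTdef
    have hcover : ∀ z : Fin k → ZMod 2, ¬ (B x (Pi.single i 1 + z) + B x z = p x i) →
        z ∈ E ∪ E.image (fun w => Pi.single i 1 + w) := by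
      intro z hz
      rw [Finset.mem_union]
      by_contra hc
      push_neg at hc
      obtain ⟨hz1, hz2⟩ := hc
      have hz3 : Pi.single i 1 + z ∉ E := by
        intro hmem
        exact hz2 (Finset.mem_image.mpr ⟨_, hmem, hinv z⟩)
      exact hz (hval z hz1 hz3)
    have hcardU : (E ∪ E.image (fun w => Pi.single i 1 + w)).card ≤ 2 * bad x := by
      calc (E ∪ E.image (fun w => Pi.single i 1 + w)).card
          ≤ E.card + (E.image (fun w => Pi.single i 1 + w)).card :=
            Finset.card_union_le _ _
        _ ≤ E.card + E.card := by
            exact Nat.add_le_add_left (Finset.card_image_le (s := E) (f := fun w => Pi.single i 1 + w)) _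
        _ = 2 * bad x := by rw [hEcard]; ring
    rcases hzo (p x i) with h0 | h1
    · -- p x i = 0 : show B' x i = 0
      have hsubT : T ⊆ E ∪ E.image (fun w => Pi.single i 1 + w) := by
        intro z hz
        apply hcover
        have hz4 : B x (Pi.single i 1 + z) + B x z = 1 := (mem_filter.mp hz).2
        rw [hz4, h0]
        exact one_ne_zero
      have hTcard : T.card ≤ 2 * bad x :=
        le_trans (Finset.card_le_card hsubT) hcardU
      have hnot : ¬ (N < 2 * T.card) := by omega
      have hne : B' x i ≠ 1 := fun hbi => hnot ((hB' x i).mp hbi)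
      have hb0 : B' x i = 0 := by rcases hzo (B' x i) with h | h <;> tauto
      rw [hb0, h0]
    · -- p x i = 1
      have hsubC : Tᶜ ⊆ E ∪ E.image (fun w => Pi.single i 1 + w) := by
        intro z hz
        apply hcover
        intro hcon
        rw [h1] at hcon
        exact (Finset.mem_compl.mp hz) (mem_filter.mpr ⟨mem_univ _, hcon⟩)
      have hTc : Tᶜ.card ≤ 2 * bad x :=
        le_trans (Finset.card_le_card hsubC) hcardU
      have hsum : T.card + Tᶜ.card = N := Finset.card_add_card_compl T
      have hlt : N < 2 * T.card := by omega
      rw [h1]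
      exact (hB' x i).mpr hlt
  -- counting the total number of bad pairs
  have hpairs : (univ.filter (fun xy : (Fin ℓ → Fin k → ZMod 2) × (Fin k → ZMod 2) =>
      ¬ (B xy.1 xy.2 = ∑ i, p xy.1 i * xy.2 i))).card = ∑ x, bad x := by
    rw [Finset.card_filter, Fintype.sum_prod_type]
    refine Finset.sum_congr rfl fun x _ => ?_
    simp only [hbaddef]
    rw [Finset.card_filter]
  set G := (univ.filter (fun xy : (Fin ℓ → Fin k → ZMod 2) × (Fin k → ZMod 2) =>
      B xy.1 xy.2 = ∑ i, p xy.1 i * xy.2 i)).card with hGdef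
  have hsplit : G + (∑ x, bad x) = M * N := by
    rw [← hpairs, hGdef]
    rw [Finset.card_filter_add_card_filter_not]
    rw [Finset.card_univ, Fintype.card_prod]
  -- Markov
  set S := univ.filter (fun x : Fin ℓ → Fin k → ZMod 2 => N ≤ 4 * bad x) with hSdef
  have hMarkov : N * S.card ≤ 4 * ∑ x, bad x := by
    calc N * S.card = ∑ _x ∈ S, N := by rw [Finset.sum_const, smul_eq_mul, mul_comm]
      _ ≤ ∑ x ∈ S, 4 * bad x := Finset.sum_le_sum fun x hx => (mem_filter.mp hx).2
      _ ≤ ∑ x ∈ univ, 4 * bad x := Finset.sum_le_sum_of_subset (subset_univ S)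
      _ = 4 * ∑ x, bad x := by rw [← Finset.mul_sum]
  -- the good x's
  set C := (univ.filter (fun x : Fin ℓ → Fin k → ZMod 2 => B' x = p x)).card with hCdef
  have hCge : M - S.card ≤ C := by
    have hsub2 : univ.filter (fun x : Fin ℓ → Fin k → ZMod 2 => ¬ (N ≤ 4 * bad x))
        ⊆ univ.filter (fun x : Fin ℓ → Fin k → ZMod 2 => B' x = p x) := by
      intro x hx
      exact mem_filter.mpr ⟨mem_univ _, key x (Nat.lt_of_not_le (mem_filter.mp hx).2)⟩
    have hsplit2 : S.card + (univ.filter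
        (fun x : Fin ℓ → Fin k → ZMod 2 => ¬ (N ≤ 4 * bad x))).card = M := by
      rw [hSdef, Finset.card_filter_add_card_filter_not, Finset.card_univ]
    have := Finset.card_le_card hsub2
    omega
  have hSle : S.card ≤ M := by
    have := Finset.card_le_card (subset_univ S)
    rwa [Finset.card_univ] at this
  -- real arithmetic
  have hprobeq : prob (fun xy : (Fin ℓ → Fin k → ZMod 2) × (Fin k → ZMod 2) =>
      B xy.1 xy.2 = ∑ i, p xy.1 i * xy.2 i) = (G : ℝ) / ((M : ℝ) * (N : ℝ)) := by
    simp only [prob, hGdef, Fintype.card_prod, ← hMdef, ← hNdef, Finset.filter_congr_decidable]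
    push_cast
    congr 3
    apply Finset.filter_congr_decidable
  have hMR : (0:ℝ) < M := by exact_mod_cast hMpos
  have hNR : (0:ℝ) < N := by exact_mod_cast hNpos
  rw [hprobeq] at hB
  have hG : 0.99 * ((M:ℝ) * N) < G := by
    rw [lt_div_iff₀ (by positivity)] at hB
    linarith
  have hsplitR : (G:ℝ) + (∑ x, bad x : ℕ) = (M:ℝ) * N := by exact_mod_cast hsplit
  have hMarkovR : (N:ℝ) * S.card ≤ 4 * ((∑ x, bad x : ℕ) : ℝ) := by exact_mod_cast hMarkov
  have hs : (S.card : ℝ) < 0.04 * M := by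
    have h04 : (N:ℝ) * S.card < (N:ℝ) * (0.04 * M) := by nlinarith
    exact lt_of_mul_lt_mul_left h04 hNR.le
  have hCgeR : (M:ℝ) - S.card ≤ C := by
    have : ((M - S.card : ℕ) : ℝ) ≤ C := by exact_mod_cast hCge
    rwa [Nat.cast_sub hSle] at this
  show (0.96:ℝ) ≤ prob (fun x : Fin ℓ → Fin k → ZMod 2 => B' x = p x)
  have hfinal : prob (fun x : Fin ℓ → Fin k → ZMod 2 => B' x = p x) = (C:ℝ) / M := by
    simp only [prob, hCdef, ← hMdef, Finset.filter_congr_decidable]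
    congr 3
    apply Finset.filter_congr_decidable
  rw [hfinal, le_div_iff₀ hMR]
  linarith
end

section
/- Let m ≥ 2, let δ ∈ [2^{−m}, 1], let ℓ = ⌈log_2(128m/δ² + 1)⌉, and let BIAS : {0,1}^t → ({0,1}^m)^ℓ be a 2^{−4m−1}-biased generator. Let A ⊆ {0,1}^m satisfy |A| ≥ (1/2 + δ/2)·2^m and let w ∈ {0,1}^m be arbitrary. Then Pr_{(r_1,...,r_ℓ)←BIAS(U_t)}[ |{J ⊆ [ℓ] : J ≠ ∅ and r^J ⊕ w ∈ A}| ≤ (2^ℓ − 1)/2 ] ≤ 1/(2m). -/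
open Finset
open scoped Classical

noncomputable def esgn (a : ZMod 2) : ℝ := if a = 0 then 1 else -1

lemma esgn_zero : esgn 0 = 1 := by simp [esgn]

lemma z2 : ∀ a : ZMod 2, a = 0 ∨ a = 1 := by decide

lemma z10 : (1 : ZMod 2) ≠ 0 := by decide

lemma z11 : (1 : ZMod 2) + 1 = 0 := by decide

lemma esgn_add (a b : ZMod 2) : esgn (a + b) = esgn a * esgn b := by
  rcases z2 a with rfl | rfl <;> rcases z2 b with rfl | rfl <;> simp [esgn, z11]

lemma abs_esgn (a : ZMod 2) : |esgn a| = 1 := by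
  rcases z2 a with rfl | rfl <;> simp [esgn]

lemma esgn_mul_self (a : ZMod 2) : esgn a * esgn a = 1 := by
  rcases z2 a with rfl | rfl <;> simp [esgn]

lemma esgn_eq (a : ZMod 2) : esgn a = 1 - 2 * (if a = 1 then 1 else 0) := by
  rcases z2 a with rfl | rfl <;> simp [esgn, z10.symm] <;> norm_num

lemma esgn_sum {ι : Type*} (s : Finset ι) (f : ι → ZMod 2) :
    esgn (∑ i ∈ s, f i) = ∏ i ∈ s, esgn (f i) := by
  induction s using Finset.induction with
  | empty => simp [esgn_zero]
  | @insert a s' h ih => rw [Finset.sum_insert h, Finset.prod_insert h, esgn_add, ih]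

def ip {n : ℕ} (S x : Fin n → ZMod 2) : ZMod 2 := ∑ j, S j * x j

lemma ip_add_right {n : ℕ} (S x y : Fin n → ZMod 2) : ip S (x + y) = ip S x + ip S y := by
  simp [ip, mul_add, Finset.sum_add_distrib]

lemma ip_zero_left {n : ℕ} (x : Fin n → ZMod 2) : ip 0 x = 0 := by simp [ip]

lemma sum_esgn_mul (c : ZMod 2) :
    ∑ s : ZMod 2, esgn (s * c) = if c = 0 then (2 : ℝ) else 0 := by
  have : (Finset.univ : Finset (ZMod 2)) = {0, 1} := by decide
  rw [this]
  rcases z2 c with rfl | rfl <;> simp [esgn]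

lemma orth {n : ℕ} (x : Fin n → ZMod 2) :
    ∑ S : Fin n → ZMod 2, esgn (ip S x) = if x = 0 then (2 ^ n : ℝ) else 0 := by
  have h1 : ∀ S : Fin n → ZMod 2, esgn (ip S x) = ∏ j, esgn (S j * x j) := by
    intro S; rw [ip, esgn_sum]
  simp_rw [h1]
  rw [← Fintype.prod_sum (fun j s => esgn (s * x j))]
  by_cases hx : x = 0
  · subst hx; simp [sum_esgn_mul, esgn_zero]
  · rw [if_neg hx]
    obtain ⟨j, hj⟩ : ∃ j, x j ≠ 0 := by
      by_contra h; push_neg at h; exact hx (funext h)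
    apply Finset.prod_eq_zero (Finset.mem_univ j)
    rw [sum_esgn_mul, if_neg hj]

lemma zmod2_add_eq_zero (a b : ZMod 2) : a + b = 0 ↔ a = b := by revert a b; decide

lemma fun2_add_eq_zero {α β : Type*} (u v : α → β → ZMod 2) : u + v = 0 ↔ u = v := by
  constructor
  · intro h; funext i j
    have := congrFun (congrFun h i) j
    simpa [zmod2_add_eq_zero] using this
  · rintro rfl; funext i j; simp [zmod2_add_eq_zero]

lemma fun_add_eq_zero {α : Type*} (u v : α → ZMod 2) : u + v = 0 ↔ u = v := by
  constructor
  · intro h; funext i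
    have := congrFun h i
    simpa [zmod2_add_eq_zero] using this
  · rintro rfl; funext i; simp [zmod2_add_eq_zero]

lemma inversion {n : ℕ} (A : Finset (Fin n → ZMod 2)) (x : Fin n → ZMod 2) :
    ∑ S : Fin n → ZMod 2, ((∑ a ∈ A, esgn (ip S a)) / 2 ^ n) * esgn (ip S x)
      = if x ∈ A then (1 : ℝ) else 0 := by
  have key : ∀ S : Fin n → ZMod 2,
      ((∑ a ∈ A, esgn (ip S a)) / 2 ^ n) * esgn (ip S x)
        = ∑ a ∈ A, esgn (ip S (a + x)) / 2 ^ n := by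
    intro S
    rw [div_mul_eq_mul_div, Finset.sum_mul, Finset.sum_div]
    congr 1; funext a
    rw [ip_add_right, esgn_add]
  simp_rw [key]
  rw [Finset.sum_comm]
  have key2 : ∀ a : Fin n → ZMod 2,
      ∑ S : Fin n → ZMod 2, esgn (ip S (a + x)) / 2 ^ n
        = if a = x then (1 : ℝ) else 0 := by
    intro a
    rw [← Finset.sum_div, orth]
    by_cases h : a = x
    · rw [if_pos ((fun_add_eq_zero a x).mpr h), if_pos h]
      exact div_self (by positivity)
    · rw [if_neg (fun hc => h ((fun_add_eq_zero a x).mp hc)), if_neg h, zero_div]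
  simp_rw [key2]
  rw [Finset.sum_ite_eq' A x (fun _ => (1 : ℝ))]

lemma parseval {n : ℕ} (A : Finset (Fin n → ZMod 2)) :
    ∑ S : Fin n → ZMod 2, ((∑ a ∈ A, esgn (ip S a)) / 2 ^ n) ^ 2
      = (A.card : ℝ) / 2 ^ n := by
  have key : ∀ S : Fin n → ZMod 2,
      ((∑ a ∈ A, esgn (ip S a)) / 2 ^ n) ^ 2
        = ∑ a ∈ A, ∑ b ∈ A, esgn (ip S (a + b)) / (2 ^ n * 2 ^ n) := by
    intro S
    rw [div_pow, sq, Finset.sum_mul_sum, Finset.sum_div]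
    refine Finset.sum_congr rfl fun a _ => ?_
    rw [Finset.sum_div]
    refine Finset.sum_congr rfl fun b _ => ?_
    rw [ip_add_right, esgn_add]
    ring
  simp_rw [key]
  rw [Finset.sum_comm]
  rw [Finset.sum_congr rfl (fun a _ => Finset.sum_comm)]
  have key2 : ∀ a : Fin n → ZMod 2, a ∈ A →
      ∑ b ∈ A, ∑ S : Fin n → ZMod 2, esgn (ip S (a + b)) / (2 ^ n * 2 ^ n)
        = 1 / 2 ^ n := by
    intro a ha
    have e1 : ∀ b : Fin n → ZMod 2,
        ∑ S : Fin n → ZMod 2, esgn (ip S (a + b)) / (2 ^ n * 2 ^ n)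
          = if a = b then (1 : ℝ) / 2 ^ n else 0 := by
      intro b
      rw [← Finset.sum_div, orth]
      by_cases h : a = b
      · rw [if_pos ((fun_add_eq_zero a b).mpr h), if_pos h]
        rw [div_eq_div_iff (by positivity) (by positivity)]
        ring
      · rw [if_neg (fun hc => h ((fun_add_eq_zero a b).mp hc)), if_neg h, zero_div]
    simp_rw [e1]
    rw [Finset.sum_ite_eq A a (fun _ => (1 : ℝ) / 2 ^ n), if_pos ha]
  rw [Finset.sum_congr rfl key2, Finset.sum_const, nsmul_eq_mul]
  ring

lemma ip_sum_right {n : ℕ} (S : Fin n → ZMod 2) {ι : Type*} (s : Finset ι)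
    (g : ι → Fin n → ZMod 2) : ip S (∑ i ∈ s, g i) = ∑ i ∈ s, ip S (g i) := by
  simp only [ip, Finset.sum_apply, Finset.mul_sum]
  rw [Finset.sum_comm]


noncomputable def fcoef {n : ℕ} (A : Finset (Fin n → ZMod 2)) (S : Fin n → ZMod 2) : ℝ :=
  (∑ a ∈ A, esgn (ip S a)) / 2 ^ n

lemma inversion' {n : ℕ} (A : Finset (Fin n → ZMod 2)) (x : Fin n → ZMod 2) :
    ∑ S : Fin n → ZMod 2, fcoef A S * esgn (ip S x) = if x ∈ A then (1 : ℝ) else 0 :=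
  inversion A x

lemma parseval' {n : ℕ} (A : Finset (Fin n → ZMod 2)) :
    ∑ S : Fin n → ZMod 2, (fcoef A S) ^ 2 = (A.card : ℝ) / 2 ^ n :=
  parseval A

lemma fcoef_zero {n : ℕ} (A : Finset (Fin n → ZMod 2)) :
    fcoef A 0 = (A.card : ℝ) / 2 ^ n := by
  simp [fcoef, ip_zero_left, esgn_zero]

def Tmap {ℓ m : ℕ} (q : Finset (Fin ℓ) × (Fin m → ZMod 2)) : Fin ℓ → Fin m → ZMod 2 :=
  fun i => if i ∈ q.1 then q.2 else 0

lemma Tmap_inj {ℓ m : ℕ} {q q' : Finset (Fin ℓ) × (Fin m → ZMod 2)}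
    (h1 : q.1.Nonempty) (h2 : q.2 ≠ 0) (h1' : q'.1.Nonempty) (h2' : q'.2 ≠ 0)
    (h : Tmap q = Tmap q') : q = q' := by
  obtain ⟨J, S⟩ := q
  obtain ⟨J', S'⟩ := q'
  simp only at h1 h2 h1' h2'
  have hSS : S = S' := by
    obtain ⟨i, hi⟩ := h1
    have hx := congrFun h i
    simp only [Tmap, if_pos hi] at hx
    by_cases hi' : i ∈ J'
    · rw [if_pos hi'] at hx; exact hx
    · rw [if_neg hi'] at hx; exact absurd hx h2
  subst hSS
  have hJJ : J = J' := by
    ext x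
    have hx := congrFun h x
    by_cases ha : x ∈ J <;> by_cases hb : x ∈ J' <;>
      simp only [Tmap, ha, hb, if_pos, if_neg, if_true, if_false] at hx <;> simp [ha, hb]
    · exact absurd hx h2
    · exact absurd hx.symm h2
  rw [hJJ]

lemma inner_Tmap {ℓ m : ℕ} (J : Finset (Fin ℓ)) (S : Fin m → ZMod 2)
    (r : Fin ℓ → Fin m → ZMod 2) :
    (∑ i, ∑ j, Tmap (J, S) i j * r i j) = ip S (∑ i ∈ J, r i) := by
  have key : ∀ i, (∑ j, Tmap (J, S) i j * r i j) = if i ∈ J then ip S (r i) else 0 := by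
    intro i
    by_cases hi : i ∈ J <;> simp [Tmap, hi, ip]
  simp_rw [key]
  rw [Finset.sum_ite_mem, Finset.univ_inter, (ip_sum_right S J r).symm]

lemma inner_add {ℓ m : ℕ} (u v : Fin ℓ → Fin m → ZMod 2) (r : Fin ℓ → Fin m → ZMod 2) :
    (∑ i, ∑ j, (u + v) i j * r i j)
      = (∑ i, ∑ j, u i j * r i j) + (∑ i, ∑ j, v i j * r i j) := by
  simp [add_mul, Finset.sum_add_distrib]

lemma card_fun2 (t : ℕ) : (Fintype.card (Fin t → ZMod 2)) = 2 ^ t := by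
  simp

lemma bias_bound {t : ℕ} (ε : ℝ) (F : (Fin t → ZMod 2) → ZMod 2)
    (h : prob (fun y => F y = 1) ∈ Set.Icc (1 / 2 - ε : ℝ) (1 / 2 + ε)) :
    |∑ y : Fin t → ZMod 2, esgn (F y)| ≤ 2 * ε * 2 ^ t := by
  obtain ⟨hlo, hhi⟩ := h
  set C : ℕ := (Finset.univ.filter (fun y : Fin t → ZMod 2 => F y = 1)).card with hC
  have hcard : ((Fintype.card (Fin t → ZMod 2)) : ℝ) = 2 ^ t := by
    rw [card_fun2]; push_cast; ring
  have hprob : prob (fun y : Fin t → ZMod 2 => F y = 1) = (C : ℝ) / 2 ^ t := by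
    rw [prob, hcard, hC]
    congr!
  rw [hprob] at hlo hhi
  have h2t : (0 : ℝ) < 2 ^ t := by positivity
  rw [le_div_iff₀ h2t] at hlo
  rw [div_le_iff₀ h2t] at hhi
  have hsum : ∑ y : Fin t → ZMod 2, esgn (F y) = 2 ^ t - 2 * (C : ℝ) := by
    have e1 : ∀ y : Fin t → ZMod 2, esgn (F y)
        = 1 - 2 * (if F y = 1 then (1:ℝ) else 0) := fun y => esgn_eq (F y)
    rw [Finset.sum_congr rfl fun y _ => e1 y, Finset.sum_sub_distrib, Finset.sum_const,
      ← Finset.mul_sum, Finset.sum_boole, ← hC, Finset.card_univ, card_fun2]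
    push_cast
    ring
  rw [hsum, abs_le]
  constructor <;> nlinarith [hlo, hhi]


lemma esgn_sq (a : ZMod 2) : esgn a ^ 2 = 1 := by rw [sq, esgn_mul_self]

lemma sq_sum_bound {α ι : Type*} [Fintype α] [DecidableEq ι] (D : Finset ι)
    (c : ι → ℝ) (X : ι → α → ℝ) (K W : ℝ) (hW : 0 ≤ W)
    (hdiag : ∀ q ∈ D, ∑ y : α, X q y * X q y = K)
    (hoff : ∀ q ∈ D, ∀ q' ∈ D, q ≠ q' → |∑ y : α, X q y * X q' y| ≤ W) :
    ∑ y : α, (∑ q ∈ D, c q * X q y) ^ 2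
      ≤ K * (∑ q ∈ D, (c q) ^ 2) + W * (∑ q ∈ D, |c q|) ^ 2 := by
  have e1 : ∑ y : α, (∑ q ∈ D, c q * X q y) ^ 2
      = ∑ q ∈ D, ∑ q' ∈ D, (c q * c q') * (∑ y : α, X q y * X q' y) := by
    simp_rw [sq, Finset.sum_mul_sum]
    rw [Finset.sum_comm]
    refine Finset.sum_congr rfl fun q _ => ?_
    rw [Finset.sum_comm]
    refine Finset.sum_congr rfl fun q' _ => ?_
    rw [Finset.mul_sum]
    refine Finset.sum_congr rfl fun y _ => ?_
    ring
  rw [e1]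
  have hpair : ∀ q ∈ D, ∀ q' ∈ D,
      (c q * c q') * (∑ y : α, X q y * X q' y)
        ≤ (if q' = q then (c q) ^ 2 * K else 0) + |c q| * |c q'| * W := by
    intro q hq q' hq'
    by_cases hqq : q' = q
    · subst hqq
      rw [if_pos rfl, hdiag q' hq']
      have h2 : 0 ≤ |c q'| * |c q'| * W := by positivity
      nlinarith [h2]
    · rw [if_neg hqq]
      have h1 := hoff q hq q' hq' (fun h => hqq h.symm)
      have h0 : 0 ≤ |c q| * |c q'| * W := by positivity
      calc (c q * c q') * (∑ y : α, X q y * X q' y)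
          ≤ |(c q * c q') * (∑ y : α, X q y * X q' y)| := le_abs_self _
        _ = |c q| * |c q'| * |∑ y : α, X q y * X q' y| := by
            rw [abs_mul, abs_mul]
        _ ≤ |c q| * |c q'| * W := by
            have := mul_le_mul_of_nonneg_left h1 (mul_nonneg (abs_nonneg (c q)) (abs_nonneg (c q')))
            linarith [this]
        _ ≤ 0 + |c q| * |c q'| * W := by linarith
  have hdiagsum : ∑ q ∈ D, ∑ q' ∈ D, (if q' = q then (c q) ^ 2 * K else 0)
      = K * (∑ q ∈ D, (c q) ^ 2) := by
    rw [Finset.mul_sum]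
    refine Finset.sum_congr rfl fun q hq => ?_
    rw [Finset.sum_ite_eq' D q (fun _ => (c q) ^ 2 * K), if_pos hq]
    ring
  have hoffsum : ∑ q ∈ D, ∑ q' ∈ D, |c q| * |c q'| * W = W * (∑ q ∈ D, |c q|) ^ 2 := by
    rw [sq, Finset.sum_mul_sum, Finset.mul_sum]
    refine Finset.sum_congr rfl fun q _ => ?_
    rw [Finset.mul_sum]
    exact Finset.sum_congr rfl fun q' _ => by ring
  calc ∑ q ∈ D, ∑ q' ∈ D, (c q * c q') * (∑ y : α, X q y * X q' y)
      ≤ ∑ q ∈ D, ∑ q' ∈ D, ((if q' = q then (c q) ^ 2 * K else 0) + |c q| * |c q'| * W) :=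
        Finset.sum_le_sum fun q hq => Finset.sum_le_sum fun q' hq' => hpair q hq q' hq'
    _ = (∑ q ∈ D, ∑ q' ∈ D, (if q' = q then (c q) ^ 2 * K else 0))
        + ∑ q ∈ D, ∑ q' ∈ D, |c q| * |c q'| * W := by
        simp_rw [Finset.sum_add_distrib]
    _ = K * (∑ q ∈ D, (c q) ^ 2) + W * (∑ q ∈ D, |c q|) ^ 2 := by
        rw [hdiagsum, hoffsum]

lemma secmom {t ℓ m : ℕ} (BIAS : (Fin t → ZMod 2) → Fin ℓ → (Fin m → ZMod 2))
    (ε : ℝ) (hε : 0 ≤ ε)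
    (hB' : ∀ u : Fin ℓ → Fin m → ZMod 2, u ≠ 0 →
      |∑ y : Fin t → ZMod 2, esgn (∑ i, ∑ j, u i j * BIAS y i j)| ≤ 2 * ε * 2 ^ t)
    (A : Finset (Fin m → ZMod 2)) (w : Fin m → ZMod 2) :
    ∑ y : Fin t → ZMod 2,
      (∑ J ∈ Finset.univ.filter (fun J : Finset (Fin ℓ) => J.Nonempty),
        ((if (∑ i ∈ J, BIAS y i) + w ∈ A then (1 : ℝ) else 0) - (A.card : ℝ) / 2 ^ m)) ^ 2
    ≤ 2 ^ t * ((∑ S ∈ Finset.univ.erase (0 : Fin m → ZMod 2), (fcoef A S) ^ 2) *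
        (((Finset.univ.filter (fun J : Finset (Fin ℓ) => J.Nonempty)).card : ℝ)
          + 2 * ε * 2 ^ m *
            ((Finset.univ.filter (fun J : Finset (Fin ℓ) => J.Nonempty)).card : ℝ) ^ 2)) := by
  classical
  have hmemD : ∀ q ∈ (Finset.univ.filter (fun J : Finset (Fin ℓ) => J.Nonempty)) ×ˢ
      (Finset.univ.erase (0 : Fin m → ZMod 2)), q.1.Nonempty ∧ q.2 ≠ 0 := by
    intro q hq
    rw [Finset.mem_product, Finset.mem_filter, Finset.mem_erase] at hq
    exact ⟨hq.1.2, hq.2.1⟩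
  -- expansion of the indicator sum
  have hexp : ∀ y : Fin t → ZMod 2,
      (∑ J ∈ Finset.univ.filter (fun J : Finset (Fin ℓ) => J.Nonempty),
        ((if (∑ i ∈ J, BIAS y i) + w ∈ A then (1 : ℝ) else 0) - (A.card : ℝ) / 2 ^ m))
      = ∑ q ∈ (Finset.univ.filter (fun J : Finset (Fin ℓ) => J.Nonempty)) ×ˢ
          (Finset.univ.erase (0 : Fin m → ZMod 2)),
          (fcoef A q.2 * esgn (ip q.2 w)) * esgn (∑ i, ∑ j, Tmap q i j * BIAS y i j) := by
    intro y
    rw [Finset.sum_product]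
    refine Finset.sum_congr rfl fun J hJ => ?_
    have hinv := inversion' A ((∑ i ∈ J, BIAS y i) + w)
    rw [← Finset.add_sum_erase Finset.univ _ (Finset.mem_univ (0 : Fin m → ZMod 2))] at hinv
    have h0 : fcoef A 0 * esgn (ip 0 ((∑ i ∈ J, BIAS y i) + w)) = (A.card : ℝ) / 2 ^ m := by
      rw [ip_zero_left, esgn_zero, mul_one, fcoef_zero]
    have hterm : ∀ S ∈ Finset.univ.erase (0 : Fin m → ZMod 2),
        fcoef A S * esgn (ip S ((∑ i ∈ J, BIAS y i) + w))
          = (fcoef A S * esgn (ip S w)) * esgn (∑ i, ∑ j, Tmap (J, S) i j * BIAS y i j) := by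
      intro S _
      rw [inner_Tmap, ip_add_right, esgn_add]
      ring
    rw [h0, Finset.sum_congr rfl hterm] at hinv
    linarith [hinv]
  -- character sums
  have hdiag : ∀ q ∈ (Finset.univ.filter (fun J : Finset (Fin ℓ) => J.Nonempty)) ×ˢ
      (Finset.univ.erase (0 : Fin m → ZMod 2)),
      ∑ y : Fin t → ZMod 2, esgn (∑ i, ∑ j, Tmap q i j * BIAS y i j)
        * esgn (∑ i, ∑ j, Tmap q i j * BIAS y i j) = (2 : ℝ) ^ t := by
    intro q _
    have : ∀ y : Fin t → ZMod 2, esgn (∑ i, ∑ j, Tmap q i j * BIAS y i j)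
        * esgn (∑ i, ∑ j, Tmap q i j * BIAS y i j) = 1 := fun y => esgn_mul_self _
    rw [Finset.sum_congr rfl fun y _ => this y, Finset.sum_const, Finset.card_univ, card_fun2]
    push_cast
    ring
  have hoff : ∀ q ∈ (Finset.univ.filter (fun J : Finset (Fin ℓ) => J.Nonempty)) ×ˢ
      (Finset.univ.erase (0 : Fin m → ZMod 2)),
      ∀ q' ∈ (Finset.univ.filter (fun J : Finset (Fin ℓ) => J.Nonempty)) ×ˢ
      (Finset.univ.erase (0 : Fin m → ZMod 2)), q ≠ q' →
      |∑ y : Fin t → ZMod 2, esgn (∑ i, ∑ j, Tmap q i j * BIAS y i j)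
        * esgn (∑ i, ∑ j, Tmap q' i j * BIAS y i j)| ≤ 2 * ε * 2 ^ t := by
    intro q hq q' hq' hqq
    have hprod : ∀ y : Fin t → ZMod 2,
        esgn (∑ i, ∑ j, Tmap q i j * BIAS y i j) * esgn (∑ i, ∑ j, Tmap q' i j * BIAS y i j)
          = esgn (∑ i, ∑ j, (Tmap q + Tmap q') i j * BIAS y i j) := by
      intro y
      rw [inner_add, esgn_add]
    rw [Finset.sum_congr rfl fun y _ => hprod y]
    apply hB'
    rw [Ne, fun2_add_eq_zero]
    intro hTT
    exact hqq (Tmap_inj (hmemD q hq).1 (hmemD q hq).2 (hmemD q' hq').1 (hmemD q' hq').2 hTT)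
  -- apply the abstract bound
  have hbound := sq_sum_bound ((Finset.univ.filter (fun J : Finset (Fin ℓ) => J.Nonempty)) ×ˢ
      (Finset.univ.erase (0 : Fin m → ZMod 2)))
    (fun q => fcoef A q.2 * esgn (ip q.2 w))
    (fun q y => esgn (∑ i, ∑ j, Tmap q i j * BIAS y i j))
    ((2 : ℝ) ^ t) (2 * ε * 2 ^ t) (by positivity) hdiag hoff
  -- compute the coefficient sums
  have hcsq : ∑ q ∈ (Finset.univ.filter (fun J : Finset (Fin ℓ) => J.Nonempty)) ×ˢ
      (Finset.univ.erase (0 : Fin m → ZMod 2)), (fcoef A q.2 * esgn (ip q.2 w)) ^ 2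
      = ((Finset.univ.filter (fun J : Finset (Fin ℓ) => J.Nonempty)).card : ℝ)
        * ∑ S ∈ Finset.univ.erase (0 : Fin m → ZMod 2), (fcoef A S) ^ 2 := by
    rw [Finset.sum_product]
    have h1 : ∀ S : Fin m → ZMod 2, (fcoef A S * esgn (ip S w)) ^ 2 = (fcoef A S) ^ 2 := by
      intro S
      rw [mul_pow, esgn_sq, mul_one]
    simp_rw [h1]
    rw [Finset.sum_const, nsmul_eq_mul]
  have hcabs : ∑ q ∈ (Finset.univ.filter (fun J : Finset (Fin ℓ) => J.Nonempty)) ×ˢ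
      (Finset.univ.erase (0 : Fin m → ZMod 2)), |fcoef A q.2 * esgn (ip q.2 w)|
      = ((Finset.univ.filter (fun J : Finset (Fin ℓ) => J.Nonempty)).card : ℝ)
        * ∑ S ∈ Finset.univ.erase (0 : Fin m → ZMod 2), |fcoef A S| := by
    rw [Finset.sum_product]
    have h1 : ∀ S : Fin m → ZMod 2, |fcoef A S * esgn (ip S w)| = |fcoef A S| := by
      intro S
      rw [abs_mul, abs_esgn, mul_one]
    simp_rw [h1]
    rw [Finset.sum_const, nsmul_eq_mul]
  -- Cauchy-Schwarz
  have hCS : (∑ S ∈ Finset.univ.erase (0 : Fin m → ZMod 2), |fcoef A S|) ^ 2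
      ≤ (2 : ℝ) ^ m * ∑ S ∈ Finset.univ.erase (0 : Fin m → ZMod 2), (fcoef A S) ^ 2 := by
    have h1 := sq_sum_le_card_mul_sum_sq
      (s := Finset.univ.erase (0 : Fin m → ZMod 2)) (f := fun S => |fcoef A S|)
    have h2 : ∀ S : Fin m → ZMod 2, |fcoef A S| ^ 2 = (fcoef A S) ^ 2 := fun S => sq_abs _
    simp_rw [h2] at h1
    have h3 : ((Finset.univ.erase (0 : Fin m → ZMod 2)).card : ℝ) ≤ 2 ^ m := by
      rw [Finset.card_erase_of_mem (Finset.mem_univ _), Finset.card_univ, card_fun2]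
      have : (2 : ℕ) ^ m - 1 ≤ 2 ^ m := Nat.sub_le _ _
      calc ((2 ^ m - 1 : ℕ) : ℝ) ≤ ((2 ^ m : ℕ) : ℝ) := by exact_mod_cast this
        _ = 2 ^ m := by push_cast; ring
    have h4 : (0 : ℝ) ≤ ∑ S ∈ Finset.univ.erase (0 : Fin m → ZMod 2), (fcoef A S) ^ 2 :=
      Finset.sum_nonneg fun S _ => sq_nonneg _
    calc (∑ S ∈ Finset.univ.erase (0 : Fin m → ZMod 2), |fcoef A S|) ^ 2
        ≤ ((Finset.univ.erase (0 : Fin m → ZMod 2)).card : ℝ)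
          * ∑ S ∈ Finset.univ.erase (0 : Fin m → ZMod 2), (fcoef A S) ^ 2 := h1
      _ ≤ (2 : ℝ) ^ m * ∑ S ∈ Finset.univ.erase (0 : Fin m → ZMod 2), (fcoef A S) ^ 2 :=
          mul_le_mul_of_nonneg_right h3 h4
  -- put it together
  have step1 : ∑ y : Fin t → ZMod 2,
      (∑ J ∈ Finset.univ.filter (fun J : Finset (Fin ℓ) => J.Nonempty),
        ((if (∑ i ∈ J, BIAS y i) + w ∈ A then (1 : ℝ) else 0) - (A.card : ℝ) / 2 ^ m)) ^ 2
      = ∑ y : Fin t → ZMod 2,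
        (∑ q ∈ (Finset.univ.filter (fun J : Finset (Fin ℓ) => J.Nonempty)) ×ˢ
          (Finset.univ.erase (0 : Fin m → ZMod 2)),
          (fcoef A q.2 * esgn (ip q.2 w)) * esgn (∑ i, ∑ j, Tmap q i j * BIAS y i j)) ^ 2 :=
    Finset.sum_congr rfl fun y _ => by rw [hexp y]
  rw [step1]
  refine le_trans hbound ?_
  rw [hcsq, hcabs]
  set B2 : ℝ := ∑ S ∈ Finset.univ.erase (0 : Fin m → ZMod 2), (fcoef A S) ^ 2 with hB2
  set B1 : ℝ := ∑ S ∈ Finset.univ.erase (0 : Fin m → ZMod 2), |fcoef A S| with hB1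
  set Lc : ℝ := ((Finset.univ.filter (fun J : Finset (Fin ℓ) => J.Nonempty)).card : ℝ) with hLc
  have hLc0 : 0 ≤ Lc := by rw [hLc]; positivity
  have h5 : (Lc * B1) ^ 2 ≤ Lc ^ 2 * ((2 : ℝ) ^ m * B2) := by
    have := mul_le_mul_of_nonneg_left hCS (sq_nonneg Lc)
    nlinarith [this]
  have h2t : (0 : ℝ) < 2 ^ t := by positivity
  have h6 := mul_le_mul_of_nonneg_left h5 (show (0 : ℝ) ≤ 2 * ε * 2 ^ t by positivity)
  nlinarith [h6]

lemma markov_sq {N L p δ : ℝ} (hLpos : 0 < L) (hy : N ≤ L / 2) (hp1 : 1/2 + δ/2 ≤ p)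
    (hδ0 : 0 < δ) : δ ^ 2 * L ^ 2 / 4 ≤ (N - L * p) ^ 2 := by
  have hLp' : L * (1/2 + δ/2) ≤ L * p := mul_le_mul_of_nonneg_left hp1 hLpos.le
  have h1 : N - L * p ≤ -(δ/2 * L) := by nlinarith
  have h2 : 0 ≤ δ/2 * L := by positivity
  nlinarith [h1, h2]

lemma natineq' (m : ℕ) (hm : 2 ≤ m) : 128 * m * 2 ^ (2 * m) ≤ 63 * 2 ^ (3 * m) + 128 * m := by
  rcases Nat.lt_or_ge m 3 with h | h
  · interval_cases m
    · norm_num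
  · have h8 : ∀ k : ℕ, 3 ≤ k → 8 * k ≤ 3 * 2 ^ k := by
      intro k hk
      induction k, hk using Nat.le_induction with
      | base => norm_num
      | succ n hn ih =>
        have h3 : (8:ℕ) ≤ 8 * n := by omega
        calc 8 * (n + 1) = 8 * n + 8 := by ring
          _ ≤ 3 * 2 ^ n + 3 * 2 ^ n := by omega
          _ = 3 * 2 ^ (n + 1) := by ring
    have hh := h8 m h
    calc 128 * m * 2 ^ (2 * m) = 16 * (8 * m) * 2 ^ (2 * m) := by ring
      _ ≤ 16 * (3 * 2 ^ m) * 2 ^ (2 * m) := Nat.mul_le_mul_right _ (Nat.mul_le_mul_left 16 hh)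
      _ = 48 * 2 ^ (m + 2 * m) := by rw [pow_add]; ring
      _ = 48 * 2 ^ (3 * m) := by rw [show m + 2 * m = 3 * m from by ring]
      _ ≤ 63 * 2 ^ (3 * m) + 128 * m := by
          have : 48 * 2 ^ (3 * m) ≤ 63 * 2 ^ (3 * m) := Nat.mul_le_mul_right _ (by norm_num)
          omega

set_option maxHeartbeats 1000000 in
theorem stmt8 {t m : ℕ} (hm : 2 ≤ m) (δ : ℝ) (hδ : δ ∈ Set.Icc ((1 : ℝ) / 2 ^ m) 1)
    (ℓ : ℕ) (hℓ : (ℓ : ℤ) = ⌈Real.logb 2 (128 * m / δ ^ 2 + 1)⌉)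
    (BIAS : (Fin t → ZMod 2) → Fin ℓ → (Fin m → ZMod 2))
    (hB : ∀ T : Fin ℓ → Fin m → ZMod 2, T ≠ 0 →
      prob (fun y : Fin t → ZMod 2 =>
          (∑ i : Fin ℓ, ∑ j : Fin m, T i j * BIAS y i j) = 1) ∈
        Set.Icc (1 / 2 - 1 / 2 ^ (4 * m + 1) : ℝ) (1 / 2 + 1 / 2 ^ (4 * m + 1)))
    (A : Finset (Fin m → ZMod 2))
    (hA : ((1 : ℝ) / 2 + δ / 2) * 2 ^ m ≤ (A.card : ℝ))
    (w : Fin m → ZMod 2) :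
    prob (fun y : Fin t → ZMod 2 =>
        ((Finset.univ.filter (fun J : Finset (Fin ℓ) =>
            J.Nonempty ∧ (∑ i ∈ J, BIAS y i) + w ∈ A)).card : ℝ) ≤
          ((2 : ℝ) ^ ℓ - 1) / 2) ≤ 1 / (2 * m) := by
  classical
  obtain ⟨hδ1, hδ2⟩ := hδ
  have hmR : (2 : ℝ) ≤ (m : ℝ) := by exact_mod_cast hm
  have hp2m : (0 : ℝ) < 2 ^ m := by positivity
  have h2t : (0 : ℝ) < 2 ^ t := by positivity
  have hδ0 : (0 : ℝ) < δ := lt_of_lt_of_le (by positivity) hδ1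
  -- p bounds
  have hp1 : 1 / 2 + δ / 2 ≤ (A.card : ℝ) / 2 ^ m := by
    rw [le_div_iff₀ hp2m]; linarith [hA]
  have hple : (A.card : ℝ) / 2 ^ m ≤ 1 := by
    rw [div_le_one hp2m]
    have h := Finset.card_le_univ A
    calc (A.card : ℝ) ≤ ((Finset.univ : Finset (Fin m → ZMod 2)).card : ℝ) := by exact_mod_cast h
      _ = 2 ^ m := by rw [Finset.card_univ, card_fun2]; push_cast; ring
  -- Parseval consequence
  have hpar := parseval' A
  rw [← Finset.add_sum_erase Finset.univ _ (Finset.mem_univ (0 : Fin m → ZMod 2))] at hpar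
  have hB2 : ∑ S ∈ Finset.univ.erase (0 : Fin m → ZMod 2), (fcoef A S) ^ 2
      = (A.card : ℝ) / 2 ^ m - ((A.card : ℝ) / 2 ^ m) ^ 2 := by
    rw [fcoef_zero] at hpar
    linarith [hpar]
  have hB2nn : (0 : ℝ) ≤ (A.card : ℝ) / 2 ^ m - ((A.card : ℝ) / 2 ^ m) ^ 2 := by
    rw [← hB2]; exact Finset.sum_nonneg fun S _ => sq_nonneg _
  -- cardinality of the nonempty-sets family
  have hJcard : (Finset.univ.filter (fun J : Finset (Fin ℓ) => J.Nonempty)).card = 2 ^ ℓ - 1 := by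
    have he : Finset.univ.filter (fun J : Finset (Fin ℓ) => J.Nonempty)
        = Finset.univ.erase ∅ := by
      ext J; simp [Finset.nonempty_iff_ne_empty]
    rw [he, Finset.card_erase_of_mem (Finset.mem_univ _), Finset.card_univ,
      Fintype.card_finset, Fintype.card_fin]
  have hLr : (((Finset.univ.filter (fun J : Finset (Fin ℓ) => J.Nonempty)).card : ℕ) : ℝ)
      = 2 ^ ℓ - 1 := by
    rw [hJcard, Nat.cast_sub Nat.one_le_two_pow]; push_cast; ring
  -- lower bound on L
  have hLge : 128 * (m : ℝ) ≤ δ ^ 2 * ((2 : ℝ) ^ ℓ - 1) := by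
    have hXpos : (0 : ℝ) < 128 * m / δ ^ 2 := by positivity
    have hlog : Real.logb 2 (128 * m / δ ^ 2 + 1) ≤ (ℓ : ℝ) := by
      have h1 := Int.le_ceil (Real.logb 2 (128 * m / δ ^ 2 + 1))
      rw [← hℓ] at h1
      exact_mod_cast h1
    have h2 : (128 * (m : ℝ) / δ ^ 2 + 1) ≤ (2 : ℝ) ^ (ℓ : ℝ) := by
      calc (128 * (m : ℝ) / δ ^ 2 + 1)
          = (2 : ℝ) ^ Real.logb 2 (128 * m / δ ^ 2 + 1) := by
            rw [Real.rpow_logb (by norm_num) (by norm_num) (by linarith)]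
        _ ≤ (2 : ℝ) ^ (ℓ : ℝ) := Real.rpow_le_rpow_of_exponent_le (by norm_num) hlog
    rw [Real.rpow_natCast] at h2
    have h3 : 128 * (m : ℝ) / δ ^ 2 ≤ (2 : ℝ) ^ ℓ - 1 := by linarith
    rw [div_le_iff₀ (by positivity)] at h3
    linarith [h3]
  have hLpos : (0 : ℝ) < (2 : ℝ) ^ ℓ - 1 := by
    by_contra h
    push_neg at h
    nlinarith [hLge, hmR, mul_nonneg (sq_nonneg δ) (neg_nonneg.mpr h)]
  -- the second moment bound
  have hB' : ∀ u : Fin ℓ → Fin m → ZMod 2, u ≠ 0 →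
      |∑ y : Fin t → ZMod 2, esgn (∑ i, ∑ j, u i j * BIAS y i j)|
        ≤ 2 * (1 / 2 ^ (4 * m + 1)) * 2 ^ t :=
    fun u hu => bias_bound _ _ (hB u hu)
  have hsec := secmom BIAS (1 / 2 ^ (4 * m + 1)) (by positivity) hB' A w
  rw [hB2, hLr] at hsec
  have h2e : 2 * (1 / (2 : ℝ) ^ (4 * m + 1)) * 2 ^ m = 1 / 2 ^ (3 * m) := by
    rw [show 4 * m + 1 = 3 * m + (m + 1) by ring, pow_add, pow_succ]
    have hne : (0:ℝ) < 2 ^ (3*m) := by positivity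
    field_simp
  rw [h2e] at hsec
  -- Markov argument
  have hsum_ind : ∀ y : Fin t → ZMod 2,
      (∑ J ∈ Finset.univ.filter (fun J : Finset (Fin ℓ) => J.Nonempty),
        ((if (∑ i ∈ J, BIAS y i) + w ∈ A then (1 : ℝ) else 0) - (A.card : ℝ) / 2 ^ m))
      = ((Finset.univ.filter (fun J : Finset (Fin ℓ) =>
            J.Nonempty ∧ (∑ i ∈ J, BIAS y i) + w ∈ A)).card : ℝ)
        - ((2 : ℝ) ^ ℓ - 1) * ((A.card : ℝ) / 2 ^ m) := by
    intro y
    rw [Finset.sum_sub_distrib, Finset.sum_const, nsmul_eq_mul, hLr]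
    congr 1
    rw [Finset.sum_boole, Finset.filter_filter]
  have hmark : ∀ y : Fin t → ZMod 2,
      (((Finset.univ.filter (fun J : Finset (Fin ℓ) =>
          J.Nonempty ∧ (∑ i ∈ J, BIAS y i) + w ∈ A)).card : ℝ) ≤ ((2 : ℝ) ^ ℓ - 1) / 2) →
      δ ^ 2 * ((2 : ℝ) ^ ℓ - 1) ^ 2 / 4
        ≤ (∑ J ∈ Finset.univ.filter (fun J : Finset (Fin ℓ) => J.Nonempty),
            ((if (∑ i ∈ J, BIAS y i) + w ∈ A then (1 : ℝ) else 0)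
              - (A.card : ℝ) / 2 ^ m)) ^ 2 := by
    intro y hy
    rw [hsum_ind y]
    exact markov_sq hLpos hy hp1 hδ0
  set bad := Finset.univ.filter (fun y : Fin t → ZMod 2 =>
      ((Finset.univ.filter (fun J : Finset (Fin ℓ) =>
          J.Nonempty ∧ (∑ i ∈ J, BIAS y i) + w ∈ A)).card : ℝ) ≤ ((2 : ℝ) ^ ℓ - 1) / 2)
    with hbad
  have hcount : (bad.card : ℝ) * (δ ^ 2 * ((2 : ℝ) ^ ℓ - 1) ^ 2 / 4)
      ≤ ∑ y : Fin t → ZMod 2,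
        (∑ J ∈ Finset.univ.filter (fun J : Finset (Fin ℓ) => J.Nonempty),
          ((if (∑ i ∈ J, BIAS y i) + w ∈ A then (1 : ℝ) else 0)
            - (A.card : ℝ) / 2 ^ m)) ^ 2 := by
    calc (bad.card : ℝ) * (δ ^ 2 * ((2 : ℝ) ^ ℓ - 1) ^ 2 / 4)
        = ∑ _y ∈ bad, δ ^ 2 * ((2 : ℝ) ^ ℓ - 1) ^ 2 / 4 := by
          rw [Finset.sum_const, nsmul_eq_mul]
      _ ≤ ∑ y ∈ bad, (∑ J ∈ Finset.univ.filter (fun J : Finset (Fin ℓ) => J.Nonempty),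
          ((if (∑ i ∈ J, BIAS y i) + w ∈ A then (1 : ℝ) else 0)
            - (A.card : ℝ) / 2 ^ m)) ^ 2 :=
          Finset.sum_le_sum fun y hy => hmark y (Finset.mem_filter.mp hy).2
      _ ≤ _ := Finset.sum_le_sum_of_subset_of_nonneg
          (Finset.filter_subset _ _) (fun y _ _ => sq_nonneg _)
  have hQ := le_trans hcount hsec
  -- arithmetic facts
  have hδm : (1:ℝ) ≤ δ * 2 ^ m := by
    rw [div_le_iff₀ hp2m] at hδ1; linarith
  have ha2 : (1:ℝ) ≤ δ ^ 2 * 2 ^ (2 * m) := by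
    have hp2 : (2:ℝ) ^ (2 * m) = 2 ^ m * 2 ^ m := by rw [two_mul, pow_add]
    nlinarith [hδm, hδ0]
  have h1a : (0:ℝ) ≤ 1 - δ ^ 2 := by nlinarith [hδ0, hδ2]
  have hnatR : 128 * (m:ℝ) * (2 ^ (2 * m)) ≤ 63 * 2 ^ (3 * m) + 128 * m := by
    exact_mod_cast natineq' m hm
  have hpp : (A.card : ℝ) / 2 ^ m - ((A.card : ℝ) / 2 ^ m) ^ 2 ≤ (1 - δ ^ 2) / 4 := by
    nlinarith [hp1, hple, hδ0,
      mul_nonneg hδ0.le (show (0:ℝ) ≤ 2 * ((A.card:ℝ)/2^m) - 1 - δ by linarith)]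
  have h3m : (0:ℝ) < (2:ℝ) ^ (3 * m) := by positivity
  have hW : (1 - δ ^ 2) * (((2:ℝ) ^ ℓ - 1) * 2 ^ (3 * m) + ((2:ℝ) ^ ℓ - 1) ^ 2) * (2 * m)
      ≤ δ ^ 2 * ((2:ℝ) ^ ℓ - 1) ^ 2 * 2 ^ (3 * m) := by
    have h64 : 2 * (m:ℝ) ≤ δ ^ 2 * ((2:ℝ) ^ ℓ - 1) / 64 := by linarith [hLge]
    have cnn : (0:ℝ) ≤ ((2:ℝ) ^ ℓ - 1) * 2 ^ (3 * m) := mul_nonneg hLpos.le h3m.le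
    have hmnn : (0:ℝ) ≤ 2 * (m:ℝ) := by linarith
    have A1 : (1 - δ ^ 2) * (((2:ℝ) ^ ℓ - 1) * 2 ^ (3 * m)) * (2 * m)
        ≤ δ ^ 2 * ((2:ℝ) ^ ℓ - 1) ^ 2 * 2 ^ (3 * m) / 64 := by
      calc (1 - δ ^ 2) * (((2:ℝ) ^ ℓ - 1) * 2 ^ (3 * m)) * (2 * m)
          ≤ 1 * (((2:ℝ) ^ ℓ - 1) * 2 ^ (3 * m)) * (2 * m) := by
            linarith [mul_nonneg (mul_nonneg (sq_nonneg δ) cnn) hmnn]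
        _ = (((2:ℝ) ^ ℓ - 1) * 2 ^ (3 * m)) * (2 * m) := by ring
        _ ≤ (((2:ℝ) ^ ℓ - 1) * 2 ^ (3 * m)) * (δ ^ 2 * ((2:ℝ) ^ ℓ - 1) / 64) :=
            mul_le_mul_of_nonneg_left h64 cnn
        _ = δ ^ 2 * ((2:ℝ) ^ ℓ - 1) ^ 2 * 2 ^ (3 * m) / 64 := by ring
    have hfrac : (1 - δ ^ 2) ≤ δ ^ 2 * (2 ^ (2 * m) - 1) := by linarith [ha2]
    have h63 : ((2:ℝ) ^ (2 * m) - 1) * (2 * m) ≤ (63 / 64) * 2 ^ (3 * m) := by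
      linarith [hnatR]
    have A2 : (1 - δ ^ 2) * (((2:ℝ) ^ ℓ - 1) ^ 2) * (2 * m)
        ≤ (63 / 64) * (δ ^ 2 * ((2:ℝ) ^ ℓ - 1) ^ 2 * 2 ^ (3 * m)) := by
      have sL : (0:ℝ) ≤ ((2:ℝ) ^ ℓ - 1) ^ 2 := sq_nonneg _
      calc (1 - δ ^ 2) * (((2:ℝ) ^ ℓ - 1) ^ 2) * (2 * m)
          ≤ (δ ^ 2 * (2 ^ (2 * m) - 1)) * (((2:ℝ) ^ ℓ - 1) ^ 2) * (2 * m) := by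
            linarith [mul_le_mul_of_nonneg_right hfrac (mul_nonneg sL hmnn)]
        _ = (δ ^ 2 * ((2:ℝ) ^ ℓ - 1) ^ 2) * (((2:ℝ) ^ (2 * m) - 1) * (2 * m)) := by ring
        _ ≤ (δ ^ 2 * ((2:ℝ) ^ ℓ - 1) ^ 2) * ((63 / 64) * 2 ^ (3 * m)) := by
            refine mul_le_mul_of_nonneg_left h63 ?_
            positivity
        _ = (63 / 64) * (δ ^ 2 * ((2:ℝ) ^ ℓ - 1) ^ 2 * 2 ^ (3 * m)) := by ring
    linarith [A1, A2]
  -- final assembly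
  have hmpos : (0:ℝ) < 2 * (m:ℝ) := by linarith
  have key2 : (1 - δ ^ 2) / 4 * (((2:ℝ) ^ ℓ - 1) + 1 / 2 ^ (3 * m) * ((2:ℝ) ^ ℓ - 1) ^ 2)
      ≤ δ ^ 2 * ((2:ℝ) ^ ℓ - 1) ^ 2 / 4 * (1 / (2 * m)) := by
    rw [← sub_nonneg]
    have expand : δ ^ 2 * ((2:ℝ) ^ ℓ - 1) ^ 2 / 4 * (1 / (2 * m))
        - (1 - δ ^ 2) / 4 * (((2:ℝ) ^ ℓ - 1) + 1 / 2 ^ (3 * m) * ((2:ℝ) ^ ℓ - 1) ^ 2)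
        = (δ ^ 2 * ((2:ℝ) ^ ℓ - 1) ^ 2 * 2 ^ (3 * m)
            - (1 - δ ^ 2) * (((2:ℝ) ^ ℓ - 1) * 2 ^ (3 * m) + ((2:ℝ) ^ ℓ - 1) ^ 2) * (2 * m))
          / ((2 * m) * 2 ^ (3 * m) * 4) := by
      field_simp
    rw [expand]
    apply div_nonneg _ (by positivity)
    linarith [hW]
  have hLnn : (0:ℝ) ≤ ((2:ℝ) ^ ℓ - 1) + 1 / 2 ^ (3 * m) * ((2:ℝ) ^ ℓ - 1) ^ 2 := by
    have := mul_nonneg (le_of_lt (show (0:ℝ) < 1 / 2 ^ (3*m) by positivity)) (sq_nonneg ((2:ℝ) ^ ℓ - 1))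
    linarith [hLpos]
  have hRHSle : (2:ℝ) ^ t * (((A.card:ℝ)/2^m - ((A.card:ℝ)/2^m)^2)
        * (((2:ℝ) ^ ℓ - 1) + 1 / 2 ^ (3 * m) * ((2:ℝ) ^ ℓ - 1) ^ 2))
      ≤ (2:ℝ) ^ t * (1 / (2 * m)) * (δ ^ 2 * ((2:ℝ) ^ ℓ - 1) ^ 2 / 4) := by
    calc (2:ℝ) ^ t * (((A.card:ℝ)/2^m - ((A.card:ℝ)/2^m)^2)
          * (((2:ℝ) ^ ℓ - 1) + 1 / 2 ^ (3 * m) * ((2:ℝ) ^ ℓ - 1) ^ 2))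
        ≤ (2:ℝ) ^ t * ((1 - δ ^ 2) / 4
          * (((2:ℝ) ^ ℓ - 1) + 1 / 2 ^ (3 * m) * ((2:ℝ) ^ ℓ - 1) ^ 2)) :=
          mul_le_mul_of_nonneg_left (mul_le_mul_of_nonneg_right hpp hLnn) h2t.le
      _ ≤ (2:ℝ) ^ t * (δ ^ 2 * ((2:ℝ) ^ ℓ - 1) ^ 2 / 4 * (1 / (2 * m))) :=
          mul_le_mul_of_nonneg_left key2 h2t.le
      _ = (2:ℝ) ^ t * (1 / (2 * m)) * (δ ^ 2 * ((2:ℝ) ^ ℓ - 1) ^ 2 / 4) := by ring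
  have hpos4 : (0:ℝ) < δ ^ 2 * ((2:ℝ) ^ ℓ - 1) ^ 2 / 4 := by
    have := mul_pos (pow_pos hδ0 2) (pow_pos hLpos 2)
    linarith
  have hbc : (bad.card : ℝ) ≤ (2:ℝ) ^ t * (1 / (2 * m)) := by
    have h := le_trans hQ hRHSle
    exact le_of_mul_le_mul_right h hpos4
  unfold prob
  have hcardT : ((Fintype.card (Fin t → ZMod 2)) : ℝ) = 2 ^ t := by
    rw [card_fun2]; push_cast; ring
  rw [hcardT, div_le_iff₀ h2t]
  have hbadeq : (Finset.univ.filter (fun y : Fin t → ZMod 2 =>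
      ((Finset.univ.filter (fun J : Finset (Fin ℓ) =>
          J.Nonempty ∧ (∑ i ∈ J, BIAS y i) + w ∈ A)).card : ℝ)
        ≤ ((2 : ℝ) ^ ℓ - 1) / 2)).card = bad.card := by
    rw [hbad]
  rw [hbadeq]
  calc (bad.card : ℝ) ≤ (2:ℝ) ^ t * (1 / (2 * m)) := hbc
    _ = 1 / (2 * m) * 2 ^ t := by ring
end

section
/- Let s, n, m ∈ ℕ, let S_1, ..., S_n ⊆ [s] be subsets each of size m, and let f : {0,1}^m → {0,1}. Define G : {0,1}^s → {0,1}^n by G(x)_j = f(x|_{S_j}), where x|_{S_j} ∈ {0,1}^m is the restriction of x to the coordinates of S_j taken in increasing order. Let i < n, ε > 0, and suppose B : {0,1}^i → {0,1} satisfies Pr_{x←U_s}[B(G(x)_{1..i}) = G(x)_{i+1}] > 1/2 + ε. Then there exists an assignment z ∈ {0,1}^{[s]∖S_{i+1}} to the coordinates outside S_{i+1} such that the function C : {0,1}^m → {0,1} defined by C(w) = B(G(x_{w,z})_{1..i}), where x_{w,z} ∈ {0,1}^s agrees with w on the coordinates of S_{i+1} and with z elsewhere, satisfies Pr_{w←U_m}[C(w)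 = f(w)] > 1/2 + ε. -/
open Finset
open scoped Classical

theorem stmt10 {s n m : ℕ} (σ : Fin n → Fin m → Fin s)
    (hσ : ∀ j : Fin n, StrictMono (σ j))
    (f : (Fin m → Bool) → Bool)
    (G : (Fin s → Bool) → Fin n → Bool)
    (hG : ∀ (x : Fin s → Bool) (j : Fin n), G x j = f (fun a : Fin m => x (σ j a)))
    (i : ℕ) (hi : i < n) (ε : ℝ) (hε : 0 < ε)
    (B : (Fin i → Bool) → Bool)
    (hB : 1 / 2 + ε <
      prob (fun x : Fin s → Bool => B (bits (G x) i) = G x ⟨i, hi⟩)) :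
    ∃ z : Fin s → Bool,
      1 / 2 + ε <
        prob (fun w : Fin m → Bool =>
          B (bits (G (fun c : Fin s =>
            if h : ∃ a : Fin m, σ ⟨i, hi⟩ a = c then w h.choose else z c)) i) = f w) := by
  classical
  by_contra hcon
  push_neg at hcon
  set I : Fin n := ⟨i, hi⟩ with hI
  have hinj := (hσ I).injective
  set φ : (Fin m → Bool) → (Fin s → Bool) → (Fin s → Bool) :=
    fun w z c => if h : ∃ a : Fin m, σ I a = c then w h.choose else z c with hφ
  set P : (Fin s → Bool) → Prop := fun x => B (bits (G x) i) = G x I with hP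
  -- restriction of φ w z to S is w
  have hres : ∀ (w : Fin m → Bool) (z : Fin s → Bool) (a : Fin m), φ w z (σ I a) = w a := by
    intro w z a
    have h : ∃ a' : Fin m, σ I a' = σ I a := ⟨a, rfl⟩
    simp only [hφ]
    rw [dif_pos h]
    exact congrArg w (hinj h.choose_spec)
  have hGφ : ∀ (w : Fin m → Bool) (z : Fin s → Bool), G (φ w z) I = f w := by
    intro w z
    rw [hG]
    congr 1
    funext a
    exact hres w z a
  -- the equivalence
  let e : ((Fin m → Bool) × (Fin s → Bool)) ≃ ((Fin s → Bool) × (Fin m → Bool)) :=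
    { toFun := fun p => (φ p.1 p.2, fun a => p.2 (σ I a))
      invFun := fun q => (fun a => q.1 (σ I a),
        fun c => if h : ∃ a : Fin m, σ I a = c then q.2 h.choose else q.1 c)
      left_inv := by
        rintro ⟨w, z⟩
        refine Prod.ext ?_ ?_
        · funext a
          exact hres w z a
        · funext c
          by_cases h : ∃ a : Fin m, σ I a = c
          · simp only
            rw [dif_pos h]
            exact congrArg z h.choose_spec
          · simp only
            rw [dif_neg h]
            simp only [hφ]
            rw [dif_neg h]
      right_inv := by
        rintro ⟨x, v⟩
        refine Prod.ext ?_ ?_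
        · funext c
          by_cases h : ∃ a : Fin m, σ I a = c
          · simp only [hφ]
            rw [dif_pos h]
            exact congrArg x h.choose_spec
          · simp only [hφ]
            rw [dif_neg h, dif_neg h]
        · funext a
          have h : ∃ a' : Fin m, σ I a' = σ I a := ⟨a, rfl⟩
          simp only [hφ]
          rw [dif_pos h]
          exact congrArg v (hinj h.choose_spec) }
  -- counting identity in ℕ
  have key : (univ.filter P).card * Fintype.card (Fin m → Bool)
      = ∑ z : Fin s → Bool, (univ.filter fun w : Fin m → Bool => P (φ w z)).card := by
    have h1 : (univ.filter P).card * Fintype.card (Fin m → Bool)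
        = ∑ q : (Fin s → Bool) × (Fin m → Bool), (if P q.1 then 1 else 0) := by
      calc (univ.filter P).card * Fintype.card (Fin m → Bool)
          = (∑ x : Fin s → Bool, if P x then 1 else 0) * Fintype.card (Fin m → Bool) := by
            rw [Finset.card_filter]
        _ = ∑ x : Fin s → Bool, (if P x then 1 else 0) * Fintype.card (Fin m → Bool) := by
            rw [Finset.sum_mul]
        _ = ∑ x : Fin s → Bool, ∑ _v : Fin m → Bool, (if P x then 1 else 0) :=
            Finset.sum_congr rfl fun x _ => by
              rw [Finset.sum_const, smul_eq_mul, mul_comm, Finset.card_univ]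
        _ = ∑ q : (Fin s → Bool) × (Fin m → Bool), (if P q.1 then 1 else 0) := by
            rw [Fintype.sum_prod_type]
    have h2 : ∑ q : (Fin s → Bool) × (Fin m → Bool), (if P q.1 then 1 else 0)
        = ∑ p : (Fin m → Bool) × (Fin s → Bool), (if P (φ p.1 p.2) then 1 else 0) := by
      exact (Equiv.sum_comp e (fun q => if P q.1 then 1 else 0)).symm
    have h3 : ∑ p : (Fin m → Bool) × (Fin s → Bool), (if P (φ p.1 p.2) then 1 else 0)
        = ∑ z : Fin s → Bool, (univ.filter fun w : Fin m → Bool => P (φ w z)).card := by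
      rw [Fintype.sum_prod_type, Finset.sum_comm]
      exact Finset.sum_congr rfl fun z _ => (Finset.card_filter _ _).symm
    rw [h1, h2, h3]
  have hMpos : (0:ℝ) < (Fintype.card (Fin m → Bool) : ℝ) := by
    exact_mod_cast Fintype.card_pos
  have hNpos : (0:ℝ) < (Fintype.card (Fin s → Bool) : ℝ) := by
    exact_mod_cast Fintype.card_pos
  -- per-z bound from hcon
  have hzb : ∀ z : Fin s → Bool,
      ((univ.filter fun w : Fin m → Bool => P (φ w z)).card : ℝ)
        ≤ (1/2 + ε) * (Fintype.card (Fin m → Bool) : ℝ) := by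
    intro z
    have h1 : (univ.filter fun w : Fin m → Bool => P (φ w z))
        = (univ.filter fun w : Fin m → Bool => B (bits (G (φ w z)) i) = f w) := by
      apply Finset.filter_congr
      intro w _
      simp only [hP]
      rw [hGφ]
    have h3 : prob (fun w : Fin m → Bool => B (bits (G (φ w z)) i) = f w) ≤ 1/2 + ε := by
      simp only [hφ]
      exact hcon z
    unfold prob at h3
    rw [div_le_iff₀ hMpos] at h3
    rw [h1]
    convert h3 using 4 <;> rfl
  have keyR : ((univ.filter P).card : ℝ) * (Fintype.card (Fin m → Bool) : ℝ)
      = ∑ z : Fin s → Bool, ((univ.filter fun w : Fin m → Bool => P (φ w z)).card : ℝ) := by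
    exact_mod_cast key
  have hsum : ∑ z : Fin s → Bool, ((univ.filter fun w : Fin m → Bool => P (φ w z)).card : ℝ)
      ≤ (Fintype.card (Fin s → Bool) : ℝ) * ((1/2 + ε) * (Fintype.card (Fin m → Bool) : ℝ)) := by
    calc ∑ z : Fin s → Bool, ((univ.filter fun w : Fin m → Bool => P (φ w z)).card : ℝ)
        ≤ ∑ _z : Fin s → Bool, (1/2 + ε) * (Fintype.card (Fin m → Bool) : ℝ) :=
          Finset.sum_le_sum fun z _ => hzb z
      _ = (Fintype.card (Fin s → Bool) : ℝ) * ((1/2 + ε) * (Fintype.card (Fin m → Bool) : ℝ)) := by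
          rw [Finset.sum_const, nsmul_eq_mul, Finset.card_univ]
  unfold prob at hB
  rw [lt_div_iff₀ hNpos] at hB
  rw [← keyR] at hsum
  have hB' : (1 / 2 + ε) * (Fintype.card (Fin s → Bool) : ℝ) < ((univ.filter P).card : ℝ) := by
    convert hB using 4 <;> rfl
  have h5 := mul_lt_mul_of_pos_right hB' hMpos
  have h6 := h5.trans_le hsum
  ring_nf at h6
  exact lt_irrefl _ h6
end

section
/- Let m, ρ, t, l ∈ ℕ, ε > 0, δ > 0, let f : {0,1}^m → {0,1}, let F : {0,1}^m × {0,1}^ρ → {0,1}, and let V ⊆ {0,1}^m be such that for every x ∈ V, |E_{R←U_ρ}[F(x,R)] − f(x)| ≤ 1/2 − 2ε. Let SAMP : {0,1}^l → ({0,1}^ρ)^t be a t-query (ρ, ε, δ)-averaging sampler with δ·|V| < 1. Then there exists y ∈ {0,1}^l such that for every x ∈ V, writing (R_1, ..., R_t) = SAMP(y), a strict majority of the values F(x,R_1), ..., F(x,R_t) equals f(x), i.e. |{k ∈ [t] : F(x,R_k) = f(x)}| > t/2. -/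
open Finset
open scoped Classical

/-- `SAMP` is a `t`-query `(ρ, ε, δ)`-averaging sampler. -/
def IsSampler {l ρ t : ℕ} (SAMP : (Fin l → Bool) → Fin t → (Fin ρ → Bool))
    (ε δ : ℝ) : Prop :=
  ∀ g : (Fin ρ → Bool) → ℝ, (∀ R, g R ∈ Set.Icc (0 : ℝ) 1) →
    1 - δ ≤ prob (fun y : Fin l → Bool =>
      |(∑ k : Fin t, g (SAMP y k)) / (t : ℝ) - Exp g| ≤ ε)

lemma bval_mem (b : Bool) : bval b ∈ Set.Icc (0:ℝ) 1 := by
  cases b <;> simp [bval]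

theorem stmt11 {m ρ t l : ℕ} (ε δ : ℝ) (hε : 0 < ε) (hδ : 0 < δ)
    (f : (Fin m → Bool) → Bool) (F : (Fin m → Bool) → (Fin ρ → Bool) → Bool)
    (V : Finset (Fin m → Bool))
    (hV : ∀ x ∈ V,
      |Exp (fun R : Fin ρ → Bool => bval (F x R)) - bval (f x)| ≤ 1 / 2 - 2 * ε)
    (SAMP : (Fin l → Bool) → Fin t → (Fin ρ → Bool))
    (hS : IsSampler SAMP ε δ)
    (hδV : δ * (V.card : ℝ) < 1) :
    ∃ y : Fin l → Bool, ∀ x ∈ V,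
      (t : ℝ) / 2 <
        ((Finset.univ.filter (fun k : Fin t => F x (SAMP y k) = f x)).card : ℝ) := by
  classical
  rcases V.eq_empty_or_nonempty with hVe | hVne
  · exact ⟨fun _ => false, by simp [hVe]⟩
  obtain ⟨x0, hx0⟩ := hVne
  have hε4 : ε ≤ 1 / 4 := by
    have h1 := hV x0 hx0
    have h0 := abs_nonneg (Exp (fun R : Fin ρ → Bool => bval (F x0 R)) - bval (f x0))
    linarith
  have hVc1 : (1 : ℝ) ≤ (V.card : ℝ) := by
    exact_mod_cast Finset.card_pos.mpr ⟨x0, hx0⟩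
  have hδ1 : ¬ (1 ≤ δ) := fun h => absurd hδV (not_lt.mpr (by nlinarith))
  have ht : t ≠ 0 := by
    intro h
    subst h
    have h1 := hS (fun _ => 1) (fun R => ⟨zero_le_one, le_refl 1⟩)
    have hExp1 : Exp (fun _ : Fin ρ → Bool => (1 : ℝ)) = 1 := by
      simp [Exp]
    have hpe : (Finset.univ.filter (fun y : Fin l → Bool =>
        |(∑ k : Fin 0, (1:ℝ)) / ((0 : ℕ) : ℝ) - Exp (fun _ : Fin ρ → Bool => (1:ℝ))| ≤ ε)) = ∅ := by
      apply Finset.filter_false_of_mem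
      intro y _
      rw [hExp1]
      norm_num
      linarith
    rw [prob, hpe] at h1
    simp at h1
    exact hδ1 (by linarith)
  have htpos : (0 : ℝ) < (t : ℝ) := by exact_mod_cast Nat.pos_of_ne_zero ht
  set N : ℕ := Fintype.card (Fin l → Bool) with hNdef
  have hNpos : (0 : ℝ) < (N : ℝ) := by
    have : 0 < N := Fintype.card_pos
    exact_mod_cast this
  -- good sets
  set G : (Fin m → Bool) → Finset (Fin l → Bool) := fun x =>
    Finset.univ.filter (fun y : Fin l → Bool =>
      |(∑ k : Fin t, bval (F x (SAMP y k))) / (t : ℝ) - Exp (fun R => bval (F x R))| ≤ ε) with hGdef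
  have hG : ∀ x, (1 - δ) * (N : ℝ) ≤ ((G x).card : ℝ) := by
    intro x
    have h1 := hS (fun R => bval (F x R)) (fun R => bval_mem _)
    rw [prob] at h1
    calc (1 - δ) * (N : ℝ) ≤ (((Finset.univ.filter (fun y : Fin l → Bool =>
          |(∑ k : Fin t, bval (F x (SAMP y k))) / (t : ℝ) - Exp (fun R => bval (F x R))| ≤ ε)).card : ℝ) / N) * N := by
          apply mul_le_mul_of_nonneg_right h1 hNpos.le
      _ = ((G x).card : ℝ) := by rw [hGdef]; exact div_mul_cancel₀ _ hNpos.ne'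
  set B : Finset (Fin l → Bool) := V.biUnion (fun x => Finset.univ \ G x) with hBdef
  have hBcard : (B.card : ℝ) < (N : ℝ) := by
    have h1 : B.card ≤ ∑ x ∈ V, (Finset.univ \ G x).card := Finset.card_biUnion_le
    have h2 : ∀ x ∈ V, ((Finset.univ \ G x).card : ℝ) ≤ δ * N := by
      intro x _
      have hsub : (Finset.univ \ G x).card = N - (G x).card := by
        rw [Finset.card_sdiff_of_subset (Finset.subset_univ _), Finset.card_univ]
      have hGle : (G x).card ≤ N := Finset.card_le_univ (G x)
      have : ((Finset.univ \ G x).card : ℝ) = (N : ℝ) - ((G x).card : ℝ) := by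
        rw [hsub]; push_cast [hGle]; ring
      rw [this]
      have := hG x
      nlinarith
    calc (B.card : ℝ) ≤ ∑ x ∈ V, ((Finset.univ \ G x).card : ℝ) := by exact_mod_cast h1
      _ ≤ ∑ _x ∈ V, δ * (N : ℝ) := Finset.sum_le_sum h2
      _ = (V.card : ℝ) * (δ * N) := by rw [Finset.sum_const]; simp [mul_comm]
      _ < (N : ℝ) := by nlinarith
  have hBlt : B.card < N := by exact_mod_cast hBcard
  have hEx : ∃ y : Fin l → Bool, y ∉ B := by
    by_contra hcon
    push_neg at hcon
    have hsub : Finset.univ ⊆ B := fun y _ => hcon y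
    have h2 := Finset.card_le_card hsub
    rw [Finset.card_univ, ← hNdef] at h2
    omega
  obtain ⟨y, hyB⟩ := hEx
  refine ⟨y, fun x hx => ?_⟩
  have hyG : y ∈ G x := by
    by_contra hne
    exact hyB (Finset.mem_biUnion.mpr ⟨x, hx, Finset.mem_sdiff.mpr ⟨Finset.mem_univ y, hne⟩⟩)
  have hclose : |(∑ k : Fin t, bval (F x (SAMP y k))) / (t : ℝ) - Exp (fun R => bval (F x R))| ≤ ε := by
    have := Finset.mem_filter.mp hyG
    exact this.2
  have htri : |(∑ k : Fin t, bval (F x (SAMP y k))) / (t : ℝ) - bval (f x)| ≤ 1 / 2 - ε := by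
    have h2 := hV x hx
    calc |(∑ k : Fin t, bval (F x (SAMP y k))) / (t : ℝ) - bval (f x)|
        ≤ |(∑ k : Fin t, bval (F x (SAMP y k))) / (t : ℝ) - Exp (fun R => bval (F x R))|
          + |Exp (fun R : Fin ρ → Bool => bval (F x R)) - bval (f x)| := abs_sub_le _ _ _
      _ ≤ ε + (1 / 2 - 2 * ε) := add_le_add hclose h2
      _ = 1 / 2 - ε := by ring
  have hsum : (∑ k : Fin t, bval (F x (SAMP y k)))
      = ((Finset.univ.filter (fun k : Fin t => F x (SAMP y k) = true)).card : ℝ) := by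
    rw [← Finset.sum_boole]
    apply Finset.sum_congr rfl
    intro k _
    cases F x (SAMP y k) <;> simp [bval]
  rw [hsum] at htri
  cases hfx : f x with
  | true =>
    rw [hfx] at htri
    simp only [bval, if_true] at htri
    have h1 := (abs_le.mp htri).1
    have hdiv : (1 / 2 + ε : ℝ) ≤
        ((Finset.univ.filter (fun k : Fin t => F x (SAMP y k) = true)).card : ℝ) / (t : ℝ) := by
      linarith
    rw [le_div_iff₀ htpos] at hdiv
    nlinarith
  | false =>
    have hcard : (Finset.univ.filter (fun k : Fin t => F x (SAMP y k) = true)).card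
        + (Finset.univ.filter (fun k : Fin t => ¬ (F x (SAMP y k) = true))).card = t := by
      rw [Finset.card_filter_add_card_filter_not]
      simp
    have hfe : (Finset.univ.filter (fun k : Fin t => F x (SAMP y k) = false))
        = Finset.univ.filter (fun k : Fin t => ¬ (F x (SAMP y k) = true)) := by
      apply Finset.filter_congr
      intro k _
      simp
    rw [hfe]
    have hle : (Finset.univ.filter (fun k : Fin t => F x (SAMP y k) = true)).card ≤ t := by omega
    have hcR : ((Finset.univ.filter (fun k : Fin t => ¬ (F x (SAMP y k) = true))).card : ℝ)
        = (t : ℝ) - ((Finset.univ.filter (fun k : Fin t => F x (SAMP y k) = true)).card : ℝ) := by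
      have hn : (Finset.univ.filter (fun k : Fin t => ¬ (F x (SAMP y k) = true))).card
          = t - (Finset.univ.filter (fun k : Fin t => F x (SAMP y k) = true)).card := by omega
      rw [hn, Nat.cast_sub hle]
    rw [hcR]
    rw [hfx] at htri
    norm_num [bval] at htri
    have h1 := (abs_le.mp htri).2
    rw [div_le_iff₀ htpos] at h1
    nlinarith
end

section
/- Let B be an ordered branching program of length n and width w, and let H : {0,1}^s → {0,1}^n be an ε-hitting set generator for the class of all ordered branching programs of length n and width at most w². If u, u′ ∈ V_i are indistinguishable under H (that is, B[u, H(y)_{1..(n−i)}] = B[u′, H(y)_{1..(n−i)}] for every y ∈ {0,1}^s), then |p_{u→} − p_{u′→}| ≤ ε. -/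
open Finset
open scoped Classical

/-- `p_{v→}`: the probability of acceptance starting from state `v` in layer `i`,
over a uniformly random suffix of length `n - i`. -/
noncomputable def pAcc {n w : ℕ} (B : OBP n w) (i : ℕ) (v : Fin w) : ℝ :=
  prob (fun r : Fin (n - i) → Bool => B.label (B.walk (n - i) i v r) = true)

/-- `H` is an `ε`-hitting set generator for all OBPs of length `n` and width `W`. -/
noncomputable def IsHSG (n W s : ℕ) (H : (Fin s → Bool) → Fin n → Bool) (ε : ℝ) : Prop :=
  ∀ B' : OBP n W, ε ≤ Exp (fun x : Fin n → Bool => bval (B'.eval x)) →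
    ∃ y : Fin s → Bool, B'.eval (H y) = true

/-- States `u` and `u'` in layer `i` are indistinguishable under `H`:
they behave identically on the length-`(n-i)` prefix of every output of `H`. -/
def Indist {n w s : ℕ} (B : OBP n w) (H : (Fin s → Bool) → Fin n → Bool)
    (i : ℕ) (u u' : Fin w) : Prop :=
  ∀ y : Fin s → Bool,
    B.walk (n - i) i u (bits (H y) (n - i)) = B.walk (n - i) i u' (bits (H y) (n - i))

/-- `v_i(x)`: the state in layer `i` reached from the start
on the length-`i` prefix of `H x`. -/
def vAt {n w s : ℕ} (B : OBP n w) (H : (Fin s → Bool) → Fin n → Bool)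
    (i : ℕ) (x : Fin s → Bool) : Fin w :=
  B.reach (bits (H x) i)

/-- A state `v` in layer `i < n` is unverified if one of its successors is not
reached (in layer `i+1`) by any output of `H`. -/
def Unverified {n w s : ℕ} (B : OBP n w) (H : (Fin s → Bool) → Fin n → Bool)
    (i : ℕ) (v : Fin w) : Prop :=
  i < n ∧ ∃ b : Bool, ∀ x' : Fin s → Bool, B.next i v b ≠ vAt B H (i + 1) x'


/- ===== Auxiliary development ===== -/

namespace OBP

/-- Walk taking an infinite bit stream, easier to reason about. -/
def walkN {n w : ℕ} (B : OBP n w) : ℕ → ℕ → Fin w → (ℕ → Bool) → Fin w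
  | 0, _, v, _ => v
  | k + 1, j, v, x => walkN B k (j + 1) (B.next j v (x 0)) (fun t => x (t + 1))

lemma walkN_congr {n w : ℕ} (B : OBP n w) : ∀ (k j : ℕ) (v : Fin w) (x x' : ℕ → Bool),
    (∀ t < k, x t = x' t) → B.walkN k j v x = B.walkN k j v x'
  | 0, _, _, _, _, _ => rfl
  | k + 1, j, v, x, x', h => by
      simp only [walkN]
      rw [h 0 (Nat.succ_pos k)]
      exact walkN_congr B k (j + 1) _ _ _ (fun t ht => h (t + 1) (by omega))

lemma walk_eq_walkN {n w : ℕ} (B : OBP n w) : ∀ (k j : ℕ) (v : Fin w) (x : Fin k → Bool),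
    B.walk k j v x = B.walkN k j v (fun t => if h : t < k then x ⟨t, h⟩ else false)
  | 0, _, _, _ => rfl
  | k + 1, j, v, x => by
      show B.walk k (j + 1) (B.next j v (x 0)) (fun j => x j.succ) =
        B.walkN k (j + 1) (B.next j v (if h : 0 < k + 1 then x ⟨0, h⟩ else false))
          (fun t => if h : t + 1 < k + 1 then x ⟨t + 1, h⟩ else false)
      rw [walk_eq_walkN B k (j + 1)]
      have h0 : (if h : 0 < k + 1 then x ⟨0, h⟩ else false) = x 0 := by
        rw [dif_pos (Nat.succ_pos k)]
        congr
      rw [h0]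
      apply walkN_congr
      intro t ht
      rw [dif_pos ht, dif_pos (by omega : t + 1 < k + 1)]
      rfl

lemma walkN_append {n w : ℕ} (B : OBP n w) : ∀ (a b j : ℕ) (v : Fin w) (x : ℕ → Bool),
    B.walkN (a + b) j v x = B.walkN b (j + a) (B.walkN a j v x) (fun t => x (t + a))
  | 0, b, j, v, x => by simp only [Nat.zero_add, Nat.add_zero, walkN]
  | a + 1, b, j, v, x => by
      rw [Nat.succ_add]
      show B.walkN (a + b) (j + 1) (B.next j v (x 0)) (fun t => x (t + 1)) = _
      rw [walkN_append B a b (j + 1)]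
      show B.walkN b (j + 1 + a) _ _ = B.walkN b (j + (a + 1)) _ _
      rw [show j + 1 + a = j + (a + 1) from by omega]
      rfl

end OBP

/-- Pairing equivalence on states. -/
def pairE (w : ℕ) : Fin w × Fin w ≃ Fin (w ^ 2) :=
  finProdFinEquiv.trans (finCongr (by ring))

/-- The product program tracking two copies of `B` from layer `i` on,
accepting iff the two copies disagree. -/
def pairOBP {n w : ℕ} (B : OBP n w) (i : ℕ) (u u' : Fin w) : OBP n (w ^ 2) where
  start := pairE w (u, u')
  next := fun j p b =>
    if j < n - i then pairE w (B.next (i + j) ((pairE w).symm p).1 b,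
      B.next (i + j) ((pairE w).symm p).2 b) else p
  label := fun p => B.label ((pairE w).symm p).1 != B.label ((pairE w).symm p).2

lemma pairOBP_sim {n w : ℕ} (B : OBP n w) (i : ℕ) (u u' : Fin w) :
    ∀ (m j : ℕ) (a b : Fin w) (x : ℕ → Bool), j + m ≤ n - i →
      (pairOBP B i u u').walkN m j (pairE w (a, b)) x =
        pairE w (B.walkN m (i + j) a x, B.walkN m (i + j) b x)
  | 0, j, a, b, x, h => rfl
  | m + 1, j, a, b, x, h => by
      have hj : j < n - i := by omega
      show (pairOBP B i u u').walkN m (j + 1)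
        ((pairOBP B i u u').next j (pairE w (a, b)) (x 0)) (fun t => x (t + 1)) = _
      have hnext : (pairOBP B i u u').next j (pairE w (a, b)) (x 0) =
          pairE w (B.next (i + j) a (x 0), B.next (i + j) b (x 0)) := by
        show (if j < n - i then _ else _) = _
        rw [if_pos hj]
        simp
      rw [hnext, pairOBP_sim B i u u' m (j + 1) _ _ _ (by omega)]
      rfl

lemma pairOBP_id {n w : ℕ} (B : OBP n w) (i : ℕ) (u u' : Fin w) :
    ∀ (m j : ℕ) (p : Fin (w ^ 2)) (x : ℕ → Bool), n - i ≤ j →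
      (pairOBP B i u u').walkN m j p x = p
  | 0, _, _, _, _ => rfl
  | m + 1, j, p, x, h => by
      show (pairOBP B i u u').walkN m (j + 1)
        ((pairOBP B i u u').next j p (x 0)) (fun t => x (t + 1)) = p
      have hnext : (pairOBP B i u u').next j p (x 0) = p := by
        show (if j < n - i then _ else _) = _
        rw [if_neg (by omega)]
      rw [hnext]
      exact pairOBP_id B i u u' m (j + 1) p _ (by omega)

lemma pairOBP_eval {n w : ℕ} (B : OBP n w) {i : ℕ} (hi : i ≤ n) (u u' : Fin w)
    (x : Fin n → Bool) :
    (pairOBP B i u u').eval x =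
      (B.label (B.walk (n - i) i u (bits x (n - i))) !=
       B.label (B.walk (n - i) i u' (bits x (n - i)))) := by
  have hw : ∀ v : Fin w, B.walk (n - i) i v (bits x (n - i)) =
      B.walkN (n - i) i v (fun t => if h : t < n then x ⟨t, h⟩ else false) := by
    intro v
    rw [OBP.walk_eq_walkN]
    apply OBP.walkN_congr
    intro t ht
    rw [dif_pos ht]
    unfold bits
    rw [dif_pos (show ((⟨t, ht⟩ : Fin (n - i)) : ℕ) < n from by simp; omega)]
  have he : (pairOBP B i u u').eval x = (pairOBP B i u u').label
      ((pairOBP B i u u').walkN n 0 (pairE w (u, u'))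
        (fun t => if h : t < n then x ⟨t, h⟩ else false)) := by
    show (pairOBP B i u u').label ((pairOBP B i u u').walk n 0 (pairOBP B i u u').start x) = _
    rw [OBP.walk_eq_walkN]
    rfl
  rw [he]
  have happ := OBP.walkN_append (pairOBP B i u u') (n - i) i 0 (pairE w (u, u'))
    (fun t => if h : t < n then x ⟨t, h⟩ else false)
  rw [show (n - i) + i = n from by omega] at happ
  rw [happ, pairOBP_id B i u u' i (0 + (n - i)) _ _ (by omega),
    pairOBP_sim B i u u' (n - i) 0 u u' _ (by omega), hw u, hw u']
  show (B.label ((pairE w).symm (pairE w _)).1 != B.label ((pairE w).symm (pairE w _)).2) = _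
  rw [Equiv.symm_apply_apply]
  rfl

/-- Splitting an `n`-bit string into its first `k` bits and last `n - k` bits. -/
def splitE {n k : ℕ} (hk : k ≤ n) : ((Fin k → Bool) × (Fin (n - k) → Bool)) ≃ (Fin n → Bool) where
  toFun p := fun j => if h : (j : ℕ) < k then p.1 ⟨j, h⟩
    else p.2 ⟨(j : ℕ) - k, by have := j.isLt; omega⟩
  invFun x := (fun j => x ⟨j, lt_of_lt_of_le j.isLt hk⟩,
    fun j => x ⟨(j : ℕ) + k, by have := j.isLt; omega⟩)
  left_inv := by
    rintro ⟨r, t⟩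
    refine Prod.ext ?_ ?_
    · funext j
      simp only
      rw [dif_pos j.isLt]
    · funext j
      simp only
      rw [dif_neg (by omega)]
      congr 1
      exact Fin.ext (by simp)
  right_inv := by
    intro x
    funext j
    simp only
    split_ifs with h
    · congr 1
    · congr 1
      exact Fin.ext (by simp; omega)

lemma bits_splitE {n k : ℕ} (hk : k ≤ n) (p : (Fin k → Bool) × (Fin (n - k) → Bool)) :
    bits (splitE hk p) k = p.1 := by
  funext j
  have hjn : (j : ℕ) < n := lt_of_lt_of_le j.isLt hk
  unfold bits splitE
  simp only [Equiv.coe_fn_mk]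
  rw [dif_pos hjn, dif_pos (show ((⟨(j : ℕ), hjn⟩ : Fin n) : ℕ) < k from j.isLt)]

lemma Exp_comp_bits {n k : ℕ} (hk : k ≤ n) (f : (Fin k → Bool) → ℝ) :
    Exp (fun x : Fin n → Bool => f (bits x k)) = Exp f := by
  unfold Exp
  rw [← Equiv.sum_comp (splitE hk) (fun x => f (bits x k))]
  have hb : ∀ p : (Fin k → Bool) × (Fin (n - k) → Bool),
      f (bits (splitE hk p) k) = f p.1 := fun p => by rw [bits_splitE hk]
  rw [Finset.sum_congr rfl (fun p _ => hb p), Fintype.sum_prod_type]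
  simp only [Finset.sum_const, nsmul_eq_mul, Finset.card_univ]
  rw [← Finset.mul_sum]
  have c1 : (Fintype.card (Fin n → Bool) : ℝ) = 2 ^ n := by
    simp [Fintype.card_fun]
  have c2 : (Fintype.card (Fin k → Bool) : ℝ) = 2 ^ k := by
    simp [Fintype.card_fun]
  have c3 : (Fintype.card (Fin (n - k) → Bool) : ℝ) = 2 ^ (n - k) := by
    simp [Fintype.card_fun]
  rw [c1, c2, c3, show ((2 : ℝ)) ^ n = 2 ^ (n - k) * 2 ^ k from by
    rw [← pow_add]; congr 1; omega]
  rw [mul_div_mul_left _ _ (by positivity : ((2:ℝ)) ^ (n - k) ≠ 0)]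

lemma Exp_sub_le {α : Type*} [Fintype α] {f g h : α → ℝ} (hfg : ∀ a, f a - g a ≤ h a) :
    Exp f - Exp g ≤ Exp h := by
  unfold Exp
  rw [div_sub_div_same, ← Finset.sum_sub_distrib]
  exact div_le_div_of_nonneg_right (Finset.sum_le_sum (fun a _ => hfg a)) (Nat.cast_nonneg _)

lemma pAcc_eq {n w : ℕ} (B : OBP n w) (i : ℕ) (v : Fin w) :
    pAcc B i v = Exp (fun r : Fin (n - i) → Bool => bval (B.label (B.walk (n - i) i v r))) := by
  unfold pAcc prob Exp bval
  congr 1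
  rw [Finset.sum_boole]
  norm_cast
  rw [Finset.filter_congr_decidable, Finset.filter_congr_decidable]

lemma bval_sub_le (a b : Bool) : bval a - bval b ≤ bval (a != b) := by
  cases a <;> cases b <;> simp [bval]

lemma bval_sub_le' (a b : Bool) : bval b - bval a ≤ bval (a != b) := by
  cases a <;> cases b <;> simp [bval]


theorem stmt12 {n w s : ℕ} (B : OBP n w) (ε : ℝ)
    (H : (Fin s → Bool) → Fin n → Bool) (hH : IsHSG n (w ^ 2) s H ε)
    (i : ℕ) (hi : i ≤ n) (u u' : Fin w) (hind : Indist B H i u u') :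
    |pAcc B i u - pAcc B i u'| ≤ ε := by
  by_contra hcon
  push_neg at hcon
  have hk : n - i ≤ n := Nat.sub_le n i
  have habs : |pAcc B i u - pAcc B i u'| ≤
      Exp (fun r : Fin (n - i) → Bool =>
        bval (B.label (B.walk (n - i) i u r) != B.label (B.walk (n - i) i u' r))) := by
    rw [pAcc_eq, pAcc_eq, abs_sub_le_iff]
    exact ⟨Exp_sub_le (fun r => bval_sub_le _ _), Exp_sub_le (fun r => bval_sub_le' _ _)⟩
  have hExpEq : Exp (fun r : Fin (n - i) → Bool =>
        bval (B.label (B.walk (n - i) i u r) != B.label (B.walk (n - i) i u' r))) =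
      Exp (fun x : Fin n → Bool => bval ((pairOBP B i u u').eval x)) := by
    rw [← Exp_comp_bits hk (fun r =>
      bval (B.label (B.walk (n - i) i u r) != B.label (B.walk (n - i) i u' r)))]
    congr 1
    funext x
    rw [pairOBP_eval B hi u u' x]
  have hge : ε ≤ Exp (fun x : Fin n → Bool => bval ((pairOBP B i u u').eval x)) :=
    le_of_lt (lt_of_lt_of_le hcon (hExpEq ▸ habs))
  obtain ⟨y, hy⟩ := hH (pairOBP B i u u') hge
  rw [pairOBP_eval B hi u u' (H y), hind y] at hy
  simp at hy
end

section
/- Let B be an ordered branching program of length n and width w and H : {0,1}^s → {0,1}^n. Suppose the real numbers p̃_{x,i} (x ∈ {0,1}^s, 0 ≤ i ≤ n) satisfy the local consistency tests: (1) for every x ∈ {0,1}^s, i < n, and x_0, x_1 ∈ {0,1}^s with B[v_i(x),0] ∼ v_{i+1}(x_0) and B[v_i(x),1] ∼ v_{i+1}(x_1), |p̃_{x,i} − (p̃_{x_0,i+1} + p̃_{x_1,i+1})/2| ≤ 5ε; (2) for every x, x′ ∈ {0,1}^s and i ≤ n with v_i(x) ∼ v_i(x′), |p̃_{x,i} − p̃_{x′,i}|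 ≤ 5ε; (3) p̃_{x,n} = B(H(x)) for every x. Let q assign to every state of B a value in [0,1] such that: (a) q_v equals the {0,1}-label of v for every v ∈ V_n; (b) q_v = (q_{B[v,0]} + q_{B[v,1]})/2 for every verified state v ∈ V_i with i < n; (c) |p̃_{x,i} − q_v| ≤ 5ε for every unverified state v ∈ V_i and every x ∈ {0,1}^s with v_i(x) = v. Then for every 0 ≤ i ≤ n and every x ∈ {0,1}^s: |p̃_{x,i} − q_{v_i(x)}| ≤ 5·ε·(n − i). -/
open Finset
open scoped Classical

theorem stmt16 {n w s : ℕ} (B : OBP n w) (ε : ℝ)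
    (H : (Fin s → Bool) → Fin n → Bool)
    (pt : (Fin s → Bool) → ℕ → ℝ)
    (h1 : ∀ (x x₀ x₁ : Fin s → Bool) (i : ℕ), i < n →
      Indist B H (i + 1) (B.next i (vAt B H i x) false) (vAt B H (i + 1) x₀) →
      Indist B H (i + 1) (B.next i (vAt B H i x) true) (vAt B H (i + 1) x₁) →
      |pt x i - (pt x₀ (i + 1) + pt x₁ (i + 1)) / 2| ≤ 5 * ε)
    (h2 : ∀ (x x' : Fin s → Bool) (i : ℕ), i ≤ n →
      Indist B H i (vAt B H i x) (vAt B H i x') → |pt x i - pt x' i| ≤ 5 * ε)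
    (h3 : ∀ x : Fin s → Bool, pt x n = bval (B.eval (H x)))
    (q : ℕ → Fin w → ℝ)
    (hq01 : ∀ i : ℕ, i ≤ n → ∀ v : Fin w, q i v ∈ Set.Icc (0 : ℝ) 1)
    (hqn : ∀ v : Fin w, q n v = bval (B.label v))
    (hqver : ∀ i : ℕ, i < n → ∀ v : Fin w, ¬ Unverified B H i v →
      q i v = (q (i + 1) (B.next i v false) + q (i + 1) (B.next i v true)) / 2)
    (hqunv : ∀ (i : ℕ) (v : Fin w), Unverified B H i v →
      ∀ x : Fin s → Bool, vAt B H i x = v → |pt x i - q i v| ≤ 5 * ε) :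
    ∀ i : ℕ, i ≤ n → ∀ x : Fin s → Bool,
      |pt x i - q i (vAt B H i x)| ≤ 5 * ε * ((n - i : ℕ) : ℝ) := by
  have hεnn : 0 ≤ 5 * ε := by
    have := h2 (fun _ => false) (fun _ => false) n le_rfl (fun y => rfl)
    simpa using le_trans (abs_nonneg _) this
  have key : ∀ k : ℕ, ∀ i : ℕ, i ≤ n → n - i = k → ∀ x : Fin s → Bool,
      |pt x i - q i (vAt B H i x)| ≤ 5 * ε * (k : ℝ) := by
    intro k
    induction k with
    | zero =>
      intro i hi hk x
      have hin : i = n := by omega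
      subst hin
      have hval : vAt B H i x = B.reach (H x) := by
        unfold vAt
        congr 1
        funext j
        simp [bits, j.isLt]
      rw [h3, hqn, hval]
      simp [OBP.eval]
    | succ k ih =>
      intro i hi hk x
      have hilt : i < n := by omega
      set v := vAt B H i x with hv
      by_cases hunv : Unverified B H i v
      · have := hqunv i v hunv x rfl
        have hk1 : (1 : ℝ) ≤ ((k : ℝ) + 1) := by have := Nat.cast_nonneg (α := ℝ) k; linarith
        calc |pt x i - q i v| ≤ 5 * ε := this
          _ = 5 * ε * 1 := by ring
          _ ≤ 5 * ε * ((k : ℝ) + 1) := by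
              exact mul_le_mul_of_nonneg_left hk1 hεnn
          _ = 5 * ε * ((k + 1 : ℕ) : ℝ) := by push_cast; ring
      · have hqv := hqver i hilt v hunv
        have hex : ∀ b : Bool, ∃ x' : Fin s → Bool, B.next i v b = vAt B H (i + 1) x' := by
          intro b
          by_contra hc
          push_neg at hc
          exact hunv ⟨hilt, b, hc⟩
        obtain ⟨x₀, hx₀⟩ := hex false
        obtain ⟨x₁, hx₁⟩ := hex true
        have hind0 : Indist B H (i + 1) (B.next i v false) (vAt B H (i + 1) x₀) := by
          intro y; rw [hx₀]
        have hind1 : Indist B H (i + 1) (B.next i v true) (vAt B H (i + 1) x₁) := by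
          intro y; rw [hx₁]
        have hA := h1 x x₀ x₁ i hilt hind0 hind1
        have hB0 := ih (i + 1) (by omega) (by omega) x₀
        have hB1 := ih (i + 1) (by omega) (by omega) x₁
        rw [← hx₀] at hB0
        rw [← hx₁] at hB1
        have : |pt x i - q i v| ≤ 5 * ε + 5 * ε * (k : ℝ) := by
          rw [hqv]
          have h3' : pt x i - (q (i + 1) (B.next i v false) + q (i + 1) (B.next i v true)) / 2
              = (pt x i - (pt x₀ (i + 1) + pt x₁ (i + 1)) / 2)
                + ((pt x₀ (i + 1) - q (i + 1) (B.next i v false))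
                  + (pt x₁ (i + 1) - q (i + 1) (B.next i v true))) / 2 := by ring
          rw [h3']
          calc _ ≤ |pt x i - (pt x₀ (i + 1) + pt x₁ (i + 1)) / 2|
                + |((pt x₀ (i + 1) - q (i + 1) (B.next i v false))
                  + (pt x₁ (i + 1) - q (i + 1) (B.next i v true))) / 2| := abs_add_le _ _
            _ ≤ 5 * ε + 5 * ε * (k : ℝ) := by
                have habs : |(pt x₀ (i + 1) - q (i + 1) (B.next i v false))
                    + (pt x₁ (i + 1) - q (i + 1) (B.next i v true))|
                    ≤ |pt x₀ (i + 1) - q (i + 1) (B.next i v false)|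
                    + |pt x₁ (i + 1) - q (i + 1) (B.next i v true)| := abs_add_le _ _
                have hd : |((pt x₀ (i + 1) - q (i + 1) (B.next i v false))
                    + (pt x₁ (i + 1) - q (i + 1) (B.next i v true))) / 2|
                    = |(pt x₀ (i + 1) - q (i + 1) (B.next i v false))
                    + (pt x₁ (i + 1) - q (i + 1) (B.next i v true))| / 2 := by
                  rw [abs_div]; norm_num
                rw [hd]
                linarith
        calc |pt x i - q i v| ≤ 5 * ε + 5 * ε * (k : ℝ) := this
          _ = 5 * ε * ((k + 1 : ℕ) : ℝ) := by push_cast; ring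
  intro i hi x
  exact key (n - i) i hi rfl x
end
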